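/- arXiv:1810.05632 — 3 statements merged into one kernel-verified Lean document; each statement's English description precedes it below -/
import Mathlib

section
/- Separation between level sets of an optical function: Let Φ : ℝ² → ℝ be differentiable with Lipschitz-continuous gradient, and suppose there are constants 0 < C₁ ≤ C₂ with C₁ ≤ |∇Φ(x)| ≤ C₂ for all x ∈ ℝ². Then for all h₁, h₂ ∈ ℝ the level set {y : Φ(y) = h₂} is non-empty, and for every x with Φ(x) = h₁ one has |h₁ − h₂| / C₂ ≤ dist( x, {y : Φ(y) = h₂} ) ≤ |h₁ − h₂| / C₁. -/
open Metric Filter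
open scoped NNReal Topology RealInnerProductSpace

noncomputable section


lemma fderiv_apply_eq_inner (Φ : EuclideanSpace ℝ (Fin 2) → ℝ)
    (y v : EuclideanSpace ℝ (Fin 2)) :
    fderiv ℝ Φ y v = ⟪gradient Φ y, v⟫ := by
  rw [gradient, InnerProductSpace.toDual_symm_apply]

lemma norm_gradient_eq (Φ : EuclideanSpace ℝ (Fin 2) → ℝ) (y : EuclideanSpace ℝ (Fin 2)) :
    ‖gradient Φ y‖ = ‖fderiv ℝ Φ y‖ := by
  rw [gradient]
  exact (InnerProductSpace.toDual ℝ _).symm.norm_map _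

lemma exists_level_point (Φ : EuclideanSpace ℝ (Fin 2) → ℝ) (C₁ : ℝ)
    (hC₁ : 0 < C₁) (hdiff : Differentiable ℝ Φ)
    (hlow : ∀ x, C₁ ≤ ‖gradient Φ x‖)
    (h₂ : ℝ) (x : EuclideanSpace ℝ (Fin 2)) (c : ℝ) (hc0 : 0 < c) (hc : c < C₁) :
    ∃ y, Φ y = h₂ ∧ dist x y ≤ |Φ x - h₂| / c := by
  set F : EuclideanSpace ℝ (Fin 2) → ℝ := fun z => |Φ z - h₂| + c * dist x z with hF
  have hFcont : Continuous F :=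
    ((hdiff.continuous.sub continuous_const).abs).add
      (continuous_const.mul (continuous_const.dist continuous_id))
  have hcoer : Tendsto F (cocompact _) atTop := by
    have h1 : Tendsto (fun z : EuclideanSpace ℝ (Fin 2) => c * dist z x) (cocompact _) atTop :=
      (tendsto_dist_right_cocompact_atTop x).const_mul_atTop hc0
    refine tendsto_atTop_mono (fun z => ?_) h1
    have : (0:ℝ) ≤ |Φ z - h₂| := abs_nonneg _
    rw [hF]; simp only [dist_comm x z]; linarith
  obtain ⟨y, hy⟩ := hFcont.exists_forall_le hcoer
  -- show Φ y = h₂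
  have hΦy : Φ y = h₂ := by
    by_contra hne
    have hd : Φ y - h₂ ≠ 0 := sub_ne_zero.mpr hne
    set s : ℝ := if 0 < Φ y - h₂ then 1 else -1 with hs
    have hs1 : s = 1 ∨ s = -1 := by rw [hs]; split <;> simp
    have hsd : s * (Φ y - h₂) = |Φ y - h₂| := by
      rw [hs]; rcases lt_or_ge 0 (Φ y - h₂) with h | h
      · rw [if_pos h, one_mul, abs_of_pos h]
      · rw [if_neg (not_lt.mpr h), abs_of_neg (lt_of_le_of_ne h hd), neg_one_mul]
    set w := gradient Φ y with hw
    have hwpos : 0 < ‖w‖ := lt_of_lt_of_le hC₁ (hlow y)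
    set v : EuclideanSpace ℝ (Fin 2) := (-s) • w with hv
    have hnv : ‖v‖ = ‖w‖ := by
      rw [hv, norm_smul]
      rcases hs1 with h | h <;> simp [h]
    set g : ℝ → ℝ := fun t => Φ (y + t • v) with hg
    have hcurve : HasDerivAt (fun t : ℝ => y + t • v) v 0 := by
      simpa using ((hasDerivAt_id (0:ℝ)).smul_const v).const_add y
    have hgd : HasDerivAt g (fderiv ℝ Φ y v) 0 := by
      have hF0 : HasFDerivAt Φ (fderiv ℝ Φ y) (y + (0:ℝ) • v) := by
        simpa using (hdiff y).hasFDerivAt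
      exact hF0.comp_hasDerivAt 0 hcurve
    have hgd' : HasDerivAt g (-s * ‖w‖ ^ 2) 0 := by
      convert hgd using 1
      rw [fderiv_apply_eq_inner, hv, real_inner_smul_right, real_inner_self_eq_norm_sq, ← hw]
    -- eventual sign equality
    have hgc : ContinuousAt g 0 := hgd.continuousAt
    have hsign : ∀ᶠ t in 𝓝 (0:ℝ), 0 < s * (g t - h₂) := by
      have h0 : 0 < s * (g 0 - h₂) := by
        rw [hg]; simpa [hsd] using abs_pos.mpr hd
      have : ContinuousAt (fun t => s * (g t - h₂)) 0 :=
        (continuousAt_const.mul (hgc.sub continuousAt_const))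
      exact this.eventually (eventually_gt_nhds h0)
    -- minimality inequality along the curve
    have hmin : ∀ t : ℝ, 0 ≤ t → |Φ y - h₂| - c * (t * ‖v‖) ≤ |g t - h₂| := by
      intro t ht
      have h1 := hy (y + t • v)
      rw [hF] at h1
      have h2 : dist x (y + t • v) ≤ dist x y + t * ‖v‖ := by
        calc dist x (y + t • v) ≤ dist x y + dist y (y + t • v) := dist_triangle _ _ _
          _ = dist x y + t * ‖v‖ := by
              rw [dist_eq_norm]
              simp [norm_smul, abs_of_nonneg ht]
      have h3 := mul_le_mul_of_nonneg_left h2 hc0.le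
      simp only [hg] at h1 ⊢
      nlinarith [h1, h3]
    -- slope limit
    have hslope : Tendsto (fun t => s * slope g 0 t) (𝓝[>] (0:ℝ))
        (𝓝 (s * (-s * ‖w‖ ^ 2))) := by
      have h1 : Tendsto (slope g 0) (𝓝[≠] (0:ℝ)) (𝓝 (-s * ‖w‖ ^ 2)) :=
        hasDerivAt_iff_tendsto_slope.mp hgd'
      exact (h1.mono_left (nhdsWithin_mono _ (fun t ht => ne_of_gt ht))).const_mul s
    have hev : ∀ᶠ t in 𝓝[>] (0:ℝ), -(c * ‖v‖) ≤ s * slope g 0 t := by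
      filter_upwards [nhdsWithin_le_nhds hsign, self_mem_nhdsWithin] with t hts htpos
      have habs : |g t - h₂| = s * (g t - h₂) := by
        rcases hs1 with h | h
        · rw [h, one_mul]; rw [h, one_mul] at hts; exact abs_of_pos hts
        · rw [h, neg_one_mul]; rw [h, neg_one_mul, neg_pos] at hts
          exact abs_of_neg hts
      have hm := hmin t htpos.le
      rw [habs] at hm
      have hg0 : |Φ y - h₂| = s * (g 0 - h₂) := by
        rw [hg]; simp [← hsd]
      rw [hg0] at hm
      rw [slope_def_field]
      rw [← sub_nonneg]
      have ht0 : (0:ℝ) < t := htpos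
      have : s * ((g t - g 0) / (t - 0)) - -(c * ‖v‖)
          = (s * (g t - h₂) - (s * (g 0 - h₂) - c * (t * ‖v‖))) / t := by
        field_simp [ht0.ne']
        ring
      rw [this]
      exact div_nonneg (by linarith) ht0.le
    have hle : -(c * ‖v‖) ≤ s * (-s * ‖w‖ ^ 2) := ge_of_tendsto hslope hev
    have hss : s * s = 1 := by rcases hs1 with h | h <;> simp [h]
    have hfinal : ‖w‖ ^ 2 ≤ c * ‖w‖ := by
      rw [hnv] at hle; nlinarith [hle, hss]
    have : ‖w‖ ≤ c := by nlinarith [hwpos, hfinal]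
    have := hlow y
    rw [← hw] at this
    linarith
  refine ⟨y, hΦy, ?_⟩
  have := hy x
  rw [hF] at this
  simp only [hΦy, sub_self, abs_zero, zero_add, dist_self, mul_zero, add_zero] at this
  rw [div_eq_inv_mul, ← mul_le_mul_iff_right₀ hc0, ← mul_assoc, mul_inv_cancel₀ (ne_of_gt hc0), one_mul]
  linarith [this]

/-- **Separation between level sets of an optical function.**
Let `Φ : ℝ² → ℝ` be differentiable with Lipschitz-continuous gradient, and suppose there are
constants `0 < C₁ ≤ C₂` with `C₁ ≤ |∇Φ(x)| ≤ C₂` for all `x`. Then for all `h₁, h₂` the level set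
`{y : Φ y = h₂}` is nonempty, and for every `x` with `Φ x = h₁`,
`|h₁ - h₂| / C₂ ≤ dist(x, {Φ = h₂}) ≤ |h₁ - h₂| / C₁`. -/
theorem separation_between_level_sets
    (Φ : EuclideanSpace ℝ (Fin 2) → ℝ) (C₁ C₂ : ℝ)
    (hC₁ : 0 < C₁) (hC₁₂ : C₁ ≤ C₂)
    (hdiff : Differentiable ℝ Φ)
    (hlip : ∃ L : ℝ≥0, LipschitzWith L (gradient Φ))
    (hlow : ∀ x, C₁ ≤ ‖gradient Φ x‖)
    (hhigh : ∀ x, ‖gradient Φ x‖ ≤ C₂) :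
    ∀ h₁ h₂ : ℝ,
      ({y : EuclideanSpace ℝ (Fin 2) | Φ y = h₂}).Nonempty ∧
      ∀ x, Φ x = h₁ →
        |h₁ - h₂| / C₂ ≤ infDist x {y | Φ y = h₂} ∧
        infDist x {y | Φ y = h₂} ≤ |h₁ - h₂| / C₁ := by
  intro h₁ h₂
  have hC₂ : 0 < C₂ := lt_of_lt_of_le hC₁ hC₁₂
  obtain ⟨y₀, hy₀, -⟩ := exists_level_point Φ C₁ hC₁ hdiff hlow h₂ 0 (C₁ / 2)
    (by positivity) (by linarith)
  refine ⟨⟨y₀, hy₀⟩, fun x hx => ?_⟩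
  have hLip : LipschitzWith C₂.toNNReal Φ := by
    apply lipschitzWith_of_nnnorm_fderiv_le hdiff
    intro z
    have h1 : ‖fderiv ℝ Φ z‖ ≤ C₂ := by rw [← norm_gradient_eq]; exact hhigh z
    rw [← NNReal.coe_le_coe, coe_nnnorm, Real.coe_toNNReal _ hC₂.le]
    exact h1
  constructor
  · -- lower bound
    by_contra hcon
    push_neg at hcon
    obtain ⟨y, hy, hylt⟩ := (infDist_lt_iff ⟨y₀, hy₀⟩).mp hcon
    have h1 : |Φ x - Φ y| ≤ C₂ * dist x y := by
      have := hLip.dist_le_mul x y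
      rwa [Real.dist_eq, Real.coe_toNNReal _ hC₂.le] at this
    rw [hx, hy] at h1
    have h2 : C₂ * dist x y < C₂ * (|h₁ - h₂| / C₂) :=
      (mul_lt_mul_iff_right₀ hC₂).mpr hylt
    rw [mul_div_cancel₀ _ (ne_of_gt hC₂)] at h2
    linarith
  · -- upper bound
    have hmono : ∀ c, 0 < c → c < C₁ → infDist x {y | Φ y = h₂} ≤ |h₁ - h₂| / c := by
      intro c hc0 hc
      obtain ⟨y, hy, hdist⟩ := exists_level_point Φ C₁ hC₁ hdiff hlow h₂ x c hc0 hc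
      rw [hx] at hdist
      exact (infDist_le_dist_of_mem (show y ∈ {y | Φ y = h₂} from hy)).trans hdist
    have hlim : Tendsto (fun c => |h₁ - h₂| / c) (𝓝[<] C₁) (𝓝 (|h₁ - h₂| / C₁)) :=
      (tendsto_const_nhds.div tendsto_id (ne_of_gt hC₁)).mono_left nhdsWithin_le_nhds
    refine ge_of_tendsto hlim ?_
    filter_upwards [self_mem_nhdsWithin, nhdsWithin_le_nhds (eventually_gt_nhds hC₁)]
      with c hcl hc0
    exact hmono c hc0 hcl
end
end

section
/- Comparison of optical functions for nearby symbols: Let C₁ ≥ 1 and δ > 0. Let a, ã : [−10,10] × ℝ² × (ℝ² ∖ {0}) → ℝ be positively homogeneous of degree 1 in ξ and C¹ in (x,ξ), with |∂_ξ a(t,x,ξ)| ≤ C₁ for |ξ| = 1, with ∂_ξ a Lipschitz in (x,ξ) on {|ξ| = 1} with constant C₁, and with |a(t,x,ξ) − ã(t,x,ξ)| ≤ δ |ξ| for all (t,x,ξ). Let Φ, Φ̃ ∈ C²([−10,10] × ℝ²) solve ∂_t Φ + a(t,x,∂_x Φ) = 0 and ∂_t Φ̃ + ã(t,x,∂_x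 Φ̃) = 0 with the same initial data Φ(0,·) = Φ̃(0,·), and assume throughout the slab that |∂²_{t,x} Φ|, |∂²_{t,x} Φ̃| ≤ C₁, that 1/2 ≤ |∂_x Φ| ≤ 2 and 1/2 ≤ |∂_x Φ̃| ≤ 2, and that |∂_x Φ − ∂_x Φ̃| ≤ 1/2. Then |Φ(t,x) − Φ̃(t,x)| ≤ C δ |t| for all (t,x) ∈ [−10,10] × ℝ², where C depends only on C₁. -/
set_option maxHeartbeats 4000000


open MeasureTheory Set
open scoped NNReal

noncomputable section

/-- Space `ℝ²`. -/
abbrev Sp : Type := EuclideanSpace ℝ (Fin 2)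
/-- Spacetime `ℝ × ℝ²`. -/
abbrev Spacetime : Type := ℝ × Sp

/-- The spacetime slab `[−10,10] × ℝ²`. -/
def Slab : Set Spacetime := Icc (-10 : ℝ) 10 ×ˢ univ

/-- The time derivative `∂_t Φ` (within the slab). -/
def dtW (Φ : Spacetime → ℝ) (z : Spacetime) : ℝ :=
  fderivWithin ℝ Φ Slab z ((1 : ℝ), (0 : Sp))

/-- The spatial gradient `∂_x Φ` (within the slab). -/
def gradxW (Φ : Spacetime → ℝ) (z : Spacetime) : Sp :=
  (WithLp.equiv 2 (Fin 2 → ℝ)).symm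
    fun j => fderivWithin ℝ Φ Slab z ((0 : ℝ), EuclideanSpace.single j 1)

/-- The `ξ`-gradient `∂_ξ a` of a symbol `a(z, ξ)`. -/
def gradXi (a : Spacetime → Sp → ℝ) (z : Spacetime) (ξ : Sp) : Sp :=
  (WithLp.equiv 2 (Fin 2 → ℝ)).symm
    fun j => fderiv ℝ (fun ξ' => a z ξ') ξ (EuclideanSpace.single j 1)

def vec2 (f : Fin 2 → ℝ) : Sp := (WithLp.equiv 2 (Fin 2 → ℝ)).symm f

lemma vec2_apply (f : Fin 2 → ℝ) (j : Fin 2) : vec2 f j = f j := rfl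

lemma sp_sum_repr (w : Sp) : ∑ j : Fin 2, w j • EuclideanSpace.single j (1:ℝ) = w := by
  simpa using (EuclideanSpace.basisFun (Fin 2) ℝ).sum_repr w

lemma repr_clm (D : Sp →L[ℝ] ℝ) (w : Sp) :
    D w = inner (𝕜 := ℝ) (vec2 (fun j => D (EuclideanSpace.single j 1))) w := by
  conv_lhs => rw [← sp_sum_repr w]
  rw [map_sum]
  rw [PiLp.inner_apply]
  simp [vec2_apply, RCLike.inner_apply, mul_comm]

lemma norm_vec2_le {f : Fin 2 → ℝ} {M : ℝ} (hM : 0 ≤ M) (h : ∀ j, |f j| ≤ M) :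
    ‖vec2 f‖ ≤ 2 * M := by
  have h1 : ‖vec2 f‖ ≤ Real.sqrt ((2*M)^2) := by
    rw [EuclideanSpace.norm_eq]
    apply Real.sqrt_le_sqrt
    have : ∀ j : Fin 2, ‖vec2 f j‖^2 ≤ M^2 := by
      intro j; rw [Real.norm_eq_abs, vec2_apply]
      exact sq_le_sq' (by linarith [abs_nonneg (f j)]) (h j)
    calc ∑ j : Fin 2, ‖vec2 f j‖^2 ≤ ∑ _j : Fin 2, M^2 := Finset.sum_le_sum fun j _ => this j
      _ = 2 * M^2 := by simp [Finset.sum_const]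
      _ ≤ (2*M)^2 := by nlinarith
  rwa [Real.sqrt_sq (by linarith)] at h1

lemma opnorm_le_norm_vec2 (D : Sp →L[ℝ] ℝ) :
    ‖D‖ ≤ ‖vec2 (fun j => D (EuclideanSpace.single j 1))‖ := by
  apply ContinuousLinearMap.opNorm_le_bound _ (norm_nonneg _)
  intro w
  rw [Real.norm_eq_abs, repr_clm D w, real_inner_comm]
  exact (abs_real_inner_le_norm w _).trans (by rw [mul_comm])

lemma dini_helper {f : ℝ → ℝ} {a b lam Bc : ℝ} (hBc : 0 < Bc)
    (hcont : ContinuousOn f (Icc a b))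
    (hslope : ∀ x ∈ Ico a b, ∀ z ∈ Ioc x b, f z - f x ≤ (z - x) * (lam + Bc * (z - x))) :
    ∀ μ > (0:ℝ), ∀ x ∈ Icc a b, f x ≤ f a + (lam + μ) * (x - a) := by
  intro μ hμ
  have := image_le_of_liminf_slope_right_lt_deriv_boundary (f := f) (f' := fun _ => lam)
    (a := a) (b := b) hcont ?_ (B := fun u => f a + (lam + μ) * (u - a))
    (B' := fun _ => lam + μ) (by simp) ?_ ?_
  · exact fun x hx => this hx
  · intro x hx r hr
    have hc : 0 < min (b - x) ((r - lam)/Bc) := by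
      apply lt_min (by linarith [hx.2]) (div_pos (by linarith) hBc)
    have hev : ∀ᶠ z in nhdsWithin x (Ioi x), slope f x z < r := by
      filter_upwards [Ioo_mem_nhdsGT_of_mem (Set.left_mem_Ico.2 (lt_add_of_pos_right x hc))]
      intro z hz
      have hzx : 0 < z - x := by linarith [hz.1]
      have h1 : f z - f x ≤ (z - x) * (lam + Bc * (z - x)) := by
        apply hslope x hx z ⟨hz.1, ?_⟩
        have := hz.2; have := min_le_left (b - x) ((r - lam)/Bc); linarith
      have h2 : Bc * (z - x) < r - lam := by
        have hlt : z - x < (r - lam)/Bc := by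
          have := hz.2; have := min_le_right (b - x) ((r - lam)/Bc); linarith
        calc Bc * (z - x) < Bc * ((r - lam)/Bc) := by
              exact mul_lt_mul_of_pos_left hlt hBc
          _ = r - lam := by field_simp
      rw [slope_def_field, div_lt_iff₀ hzx]
      calc f z - f x ≤ (z - x) * (lam + Bc * (z - x)) := h1
        _ < r * (z - x) := by nlinarith
    exact hev.frequently
  · intro x
    have : HasDerivAt (fun u => f a + (lam + μ) * (u - a)) (lam + μ) x := by
      simpa using (((hasDerivAt_id x).sub_const a).const_mul (lam + μ)).const_add (f a)
    exact this
  · intro x _ _; show lam < lam + μ; linarith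

lemma abstract_transport {A B K : ℝ} (hA : 0 ≤ A) (hB : 0 < B) (hK : 1 ≤ K)
    (ψ : ℝ → Sp → ℝ)
    (h0 : ∀ x : Sp, ψ 0 x = 0)
    (hlip : ∀ t ∈ Icc (-10:ℝ) 10, ∀ x y : Sp, |ψ t x - ψ t y| ≤ ‖x - y‖)
    (htlip : ∀ s ∈ Icc (-10:ℝ) 10, ∀ t ∈ Icc (-10:ℝ) 10, ∀ x : Sp,
      |ψ t x - ψ s x| ≤ K * |t - s|)
    (hkey : ∀ ε : ℝ, 0 < ε → ε ≤ 1 → ∀ t ∈ Icc (-10:ℝ) 10, ∀ xb : Sp,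
        IsMaxOn (fun y => ψ t y - ε * ‖y‖^2) univ xb →
        ∀ s ∈ Icc (-10:ℝ) 10, |ψ s xb - ψ t xb| ≤ |s - t| * (A + B * Real.sqrt ε + B * |s - t|)) :
    ∀ t ∈ Icc (-10:ℝ) 10, ∀ x : Sp, ψ t x ≤ A * |t| := by
  intro t ht x
  suffices hS : ∀ ε : ℝ, 0 < ε → ε ≤ 1 → ψ t x ≤ (A + B * Real.sqrt ε + ε) * |t| + ε * ‖x‖^2 by
    have hcont : ContinuousAt (fun ε : ℝ => (A + B * Real.sqrt ε + ε) * |t| + ε * ‖x‖^2) 0 := by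
      have h1 : Continuous fun ε : ℝ => (A + B * Real.sqrt ε + ε) * |t| + ε * ‖x‖^2 := by
        continuity
      exact h1.continuousAt
    have htend : Filter.Tendsto (fun ε : ℝ => (A + B * Real.sqrt ε + ε) * |t| + ε * ‖x‖^2)
        (nhdsWithin 0 (Ioi 0)) (nhds (A * |t|)) := by
      have h2 : Filter.Tendsto (fun ε : ℝ => (A + B * Real.sqrt ε + ε) * |t| + ε * ‖x‖^2)
          (nhds 0) (nhds (A * |t|)) := by
        have h3 := hcont.tendsto
        simpa using h3
      exact h2.mono_left nhdsWithin_le_nhds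
    refine ge_of_tendsto htend ?_
    filter_upwards [Ioc_mem_nhdsGT_of_mem (Set.left_mem_Ico.2 one_pos)] with ε hε
    exact hS ε hε.1 hε.2
  intro ε hε hε1
  -- existence of maximizers
  have hEx : ∀ s ∈ Icc (-10:ℝ) 10, ∃ xb : Sp, IsMaxOn (fun y => ψ s y - ε * ‖y‖^2) univ xb := by
    intro s hs
    have hcont : Continuous fun y : Sp => ψ s y - ε * ‖y‖^2 := by
      have hl : LipschitzWith 1 (fun y => ψ s y) := by
        apply LipschitzWith.of_dist_le_mul
        intro x y
        rw [Real.dist_eq, NNReal.coe_one, one_mul, dist_eq_norm]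
        exact hlip s hs x y
      exact hl.continuous.sub (by continuity)
    have hcoc : ∀ᶠ y in Filter.cocompact Sp,
        ψ s y - ε * ‖y‖^2 ≤ ψ s 0 - ε * ‖(0:Sp)‖^2 := by
      have hco : Filter.Tendsto (fun y : Sp => ‖y‖) (Filter.cocompact Sp) Filter.atTop :=
        tendsto_norm_cocompact_atTop
      filter_upwards [hco.eventually_ge_atTop (1/ε)] with y hy
      have h1 : ψ s y - ψ s 0 ≤ ‖y‖ := by
        have := hlip s hs y 0
        rw [sub_zero] at this
        linarith [(abs_le.1 this).2]
      have h2 : (1:ℝ) ≤ ε * ‖y‖ := by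
        rw [div_le_iff₀ hε] at hy
        nlinarith
      have h3 : ‖y‖ ≤ ε * ‖y‖^2 := by nlinarith [norm_nonneg y]
      simp only [norm_zero]
      nlinarith
    obtain ⟨xb, hxb⟩ := hcont.exists_forall_ge' 0 hcoc
    exact ⟨xb, fun y _ => hxb y⟩
  choose! X hX using hEx
  set lam : ℝ := A + B * Real.sqrt ε with hlam
  set m : ℝ → ℝ := fun s => ψ s (X s) - ε * ‖X s‖^2 with hm
  have hmax : ∀ s ∈ Icc (-10:ℝ) 10, ∀ y : Sp, ψ s y - ε * ‖y‖^2 ≤ m s :=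
    fun s hs y => hX s hs (mem_univ y)
  have hslope : ∀ s ∈ Icc (-10:ℝ) 10, ∀ u ∈ Icc (-10:ℝ) 10,
      m u - m s ≤ |u - s| * (lam + B * |u - s|) := by
    intro s hs u hu
    have h1 : m u - m s ≤ ψ u (X u) - ψ s (X u) := by
      have := hmax s hs (X u); simp only [hm] at this ⊢; linarith
    have h2 := hkey ε hε hε1 u hu (X u) (hX u hu) s hs
    rw [abs_sub_comm s u] at h2
    have h3 : ψ u (X u) - ψ s (X u) ≤ |u - s| * (A + B * Real.sqrt ε + B * |u - s|) := by
      have := neg_le_of_abs_le h2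
      linarith
    calc m u - m s ≤ ψ u (X u) - ψ s (X u) := h1
      _ ≤ |u - s| * (lam + B * |u - s|) := by rw [hlam]; exact h3
  have hmcont : ContinuousOn m (Icc (-10:ℝ) 10) := by
    have hlipm : ∀ s ∈ Icc (-10:ℝ) 10, ∀ u ∈ Icc (-10:ℝ) 10, |m u - m s| ≤ K * |u - s| := by
      intro s hs u hu
      have h1 : m u - m s ≤ ψ u (X u) - ψ s (X u) := by
        have := hmax s hs (X u); simp only [hm] at this ⊢; linarith
      have h2 : m s - m u ≤ ψ s (X s) - ψ u (X s) := by
        have := hmax u hu (X s); simp only [hm] at this ⊢; linarith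
      have h3 := htlip s hs u hu (X u)
      have h4 := htlip u hu s hs (X s)
      have e1 := (abs_le.1 h3).2
      have e2 := (abs_le.1 h4).2
      rw [abs_sub_comm s u] at e2
      rw [abs_le]
      constructor <;> linarith
    have hL : LipschitzOnWith (Real.toNNReal K) m (Icc (-10:ℝ) 10) := by
      apply LipschitzOnWith.of_dist_le_mul
      intro u hu s hs
      rw [Real.dist_eq, Real.dist_eq, Real.coe_toNNReal K (by linarith)]
      exact hlipm s hs u hu
    exact hL.continuousOn
  -- m 0 ≤ 0
  have h0I : (0:ℝ) ∈ Icc (-10:ℝ) 10 := by norm_num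
  have hm0 : m 0 ≤ 0 := by
    simp only [hm, h0 (X 0)]
    nlinarith [norm_nonneg (X 0), sq_nonneg ‖X 0‖]
  -- positive times
  have hpos : ∀ u ∈ Icc (0:ℝ) 10, m u ≤ m 0 + (lam + ε) * u := by
    have hd := dini_helper (f := m) (a := 0) (b := 10) (lam := lam) (Bc := B) hB
      (hmcont.mono (Icc_subset_Icc (by norm_num) le_rfl)) ?_ ε hε
    · intro u hu
      have := hd u hu
      simpa using this
    · intro u hu z hz
      have huI : u ∈ Icc (-10:ℝ) 10 := ⟨by linarith [hu.1], by linarith [hu.2]⟩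
      have hzI : z ∈ Icc (-10:ℝ) 10 := ⟨by linarith [hu.1, hz.1], hz.2⟩
      have := hslope u huI z hzI
      rw [abs_of_pos (by linarith [hz.1] : (0:ℝ) < z - u)] at this
      linarith
  -- negative times
  have hneg : ∀ u ∈ Icc (-10:ℝ) 0, m u ≤ m 0 + (lam + ε) * (-u) := by
    intro u hu
    rcases eq_or_lt_of_le hu.2 with h|h
    · rw [h]; simp
    have hd := dini_helper (f := fun s => -m s) (a := u) (b := 0) (lam := lam) (Bc := B) hB
      ((hmcont.mono (Icc_subset_Icc hu.1 (by norm_num))).neg) ?_ ε hε 0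
      (by constructor <;> linarith)
    · have hd2 : -m 0 ≤ -m u + (lam + ε) * (0 - u) := hd
      -- hd : -m 0 ≤ -m u + (lam + ε) * (0 - u)
      nlinarith [hd]
    · intro v hv z hz
      have hvI : v ∈ Icc (-10:ℝ) 10 := ⟨by linarith [hu.1, hv.1], by linarith [hv.2]⟩
      have hzI : z ∈ Icc (-10:ℝ) 10 := ⟨by linarith [hu.1, hv.1, hz.1], by linarith [hz.2]⟩
      have := hslope z hzI v hvI
      rw [abs_of_neg (by linarith [hz.1] : v - z < 0)] at this
      have h9 : m v - m z ≤ (z - v) * (lam + B * (z - v)) := by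
        rw [neg_sub] at this; exact this
      show -m z - -m v ≤ (z - v) * (lam + B * (z - v))
      linarith
  -- combine
  have hmt : m t ≤ (lam + ε) * |t| := by
    rcases le_or_gt 0 t with h|h
    · have := hpos t ⟨h, ht.2⟩
      rw [abs_of_nonneg h]; linarith
    · have := hneg t ⟨ht.1, le_of_lt h⟩
      rw [abs_of_neg h]; linarith
  have := hmax t ht x
  have hfin : ψ t x ≤ (lam + ε) * |t| + ε * ‖x‖^2 := by linarith
  rw [hlam] at hfin
  exact hfin


lemma max_grad {u : Sp → ℝ} {L : Sp →L[ℝ] ℝ} {ε : ℝ} {xb : Sp}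
    (hu : HasFDerivAt u L xb)
    (hmax : IsMaxOn (fun y : Sp => u y - ε * ‖y‖^2) univ xb) :
    ∀ w : Sp, L w = 2 * ε * inner (𝕜 := ℝ) xb w := by
  have hn : HasFDerivAt (fun y : Sp => ‖y‖^2)
      (2 • (innerSL ℝ xb).comp (ContinuousLinearMap.id ℝ Sp)) xb :=
    (hasFDerivAt_id xb).norm_sq
  have hd : HasFDerivAt (fun y : Sp => u y - ε * ‖y‖^2)
      (L - ε • (2 • (innerSL ℝ xb).comp (ContinuousLinearMap.id ℝ Sp))) xb :=
    hu.sub (hn.const_mul ε)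
  have h0 := (hmax.isLocalMax Filter.univ_mem).hasFDerivAt_eq_zero hd
  intro w
  have h1 := ContinuousLinearMap.ext_iff.1 h0 w
  simp only [ContinuousLinearMap.sub_apply, ContinuousLinearMap.smul_apply,
    ContinuousLinearMap.coe_smul', Pi.smul_apply, ContinuousLinearMap.coe_comp',
    Function.comp_apply, ContinuousLinearMap.coe_id', id_eq, innerSL_apply_apply,
    ContinuousLinearMap.zero_apply, smul_eq_mul, sub_eq_zero] at h1
  rw [h1]; ring

/-- **Comparison of optical functions for nearby symbols.** If `a, aTld` are 1-homogeneous symbols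
that are `C¹` in `(x,ξ)` with `|∂_ξ a| ≤ C₁` and `∂_ξ a` Lipschitz on the unit sphere bundle,
`|a − aTld| ≤ δ|ξ|`, and `Φ, Φ̃` solve the respective eikonal equations with the same data and
satisfy the listed pointwise bounds, then `|Φ − Φ̃| ≤ C δ |t|` with `C = C(C₁)`. -/
theorem comparison_of_optical_functions (C₁ : ℝ) (hC₁ : 1 ≤ C₁) :
    ∃ C > 0, ∀ δ : ℝ, 0 < δ →
      ∀ (a aTld : Spacetime → Sp → ℝ) (Φ Φt : Spacetime → ℝ),
      -- positive 1-homogeneity in ξ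
      (∀ z ∈ Slab, ∀ ξ : Sp, ξ ≠ 0 → ∀ c : ℝ, 0 < c → a z (c • ξ) = c * a z ξ) →
      (∀ z ∈ Slab, ∀ ξ : Sp, ξ ≠ 0 → ∀ c : ℝ, 0 < c → aTld z (c • ξ) = c * aTld z ξ) →
      -- C¹ in (x, ξ)
      (∀ t ∈ Icc (-10 : ℝ) 10,
        ContDiffOn ℝ 1 (fun p : Sp × Sp => a (t, p.1) p.2) {p : Sp × Sp | p.2 ≠ 0}) →
      (∀ t ∈ Icc (-10 : ℝ) 10,
        ContDiffOn ℝ 1 (fun p : Sp × Sp => aTld (t, p.1) p.2) {p : Sp × Sp | p.2 ≠ 0}) →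
      -- |∂_ξ a| ≤ C₁ on the unit sphere bundle
      (∀ z ∈ Slab, ∀ ξ : Sp, ‖ξ‖ = 1 → ‖gradXi a z ξ‖ ≤ C₁) →
      -- ∂_ξ a is Lipschitz in (x, ξ) on {|ξ| = 1} with constant C₁
      (∀ t ∈ Icc (-10 : ℝ) 10,
        LipschitzOnWith (Real.toNNReal C₁) (fun p : Sp × Sp => gradXi a (t, p.1) p.2)
          {p : Sp × Sp | ‖p.2‖ = 1}) →
      -- |a − aTld| ≤ δ |ξ|
      (∀ z ∈ Slab, ∀ ξ : Sp, |a z ξ - aTld z ξ| ≤ δ * ‖ξ‖) →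
      -- Φ, Φ̃ ∈ C²([−10,10] × ℝ²) solve the eikonal equations with the same data
      ContDiffOn ℝ 2 Φ Slab → ContDiffOn ℝ 2 Φt Slab →
      (∀ z ∈ Slab, dtW Φ z + a z (gradxW Φ z) = 0) →
      (∀ z ∈ Slab, dtW Φt z + aTld z (gradxW Φt z) = 0) →
      (∀ x : Sp, Φ (0, x) = Φt (0, x)) →
      -- pointwise bounds throughout the slab
      (∀ z ∈ Slab, ‖iteratedFDerivWithin ℝ 2 Φ Slab z‖ ≤ C₁) →
      (∀ z ∈ Slab, ‖iteratedFDerivWithin ℝ 2 Φt Slab z‖ ≤ C₁) →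
      (∀ z ∈ Slab, 1 / 2 ≤ ‖gradxW Φ z‖ ∧ ‖gradxW Φ z‖ ≤ 2) →
      (∀ z ∈ Slab, 1 / 2 ≤ ‖gradxW Φt z‖ ∧ ‖gradxW Φt z‖ ≤ 2) →
      (∀ z ∈ Slab, ‖gradxW Φ z - gradxW Φt z‖ ≤ 1 / 2) →
      -- conclusion
      ∀ z ∈ Slab, |Φ z - Φt z| ≤ C * δ * |z.1| := by
  refine ⟨2, by norm_num, ?_⟩
  intro δ hδ a aTld Φ Φt hHa _hHat hC1a _hC1at hGb _hLip hab hΦ hΦt heik heikt hinit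
    hD2Φ hD2Φt hgΦ hgΦt hgd z hzS
  have hC₁0 : (0:ℝ) < C₁ := by linarith
  -- basic slab facts
  have hmem : ∀ w : Spacetime, w ∈ Slab ↔ w.1 ∈ Icc (-10:ℝ) 10 := by
    intro w; constructor
    · intro h; exact h.1
    · intro h; exact ⟨h, mem_univ _⟩
  have hmem' : ∀ (s : ℝ) (x : Sp), s ∈ Icc (-10:ℝ) 10 → ((s, x) : Spacetime) ∈ Slab :=
    fun s x hs => ⟨hs, mem_univ _⟩
  have hconv : Convex ℝ Slab := (convex_Icc _ _).prod convex_univ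
  have hUD : UniqueDiffOn ℝ Slab := by
    apply uniqueDiffOn_convex hconv
    refine ⟨((0:ℝ), (0:Sp)), ?_⟩
    rw [Slab, interior_prod_eq, interior_univ, interior_Icc]
    exact ⟨by norm_num, mem_univ _⟩
  set D : Spacetime → (Spacetime →L[ℝ] ℝ) := fun w => fderivWithin ℝ Φ Slab w with hD
  set Dt : Spacetime → (Spacetime →L[ℝ] ℝ) := fun w => fderivWithin ℝ Φt Slab w with hDt
  have hDF : ∀ w ∈ Slab, HasFDerivWithinAt Φ (D w) Slab w := fun w hw =>
    ((hΦ.differentiableOn (by norm_num)) w hw).hasFDerivWithinAt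
  have hDtF : ∀ w ∈ Slab, HasFDerivWithinAt Φt (Dt w) Slab w := fun w hw =>
    ((hΦt.differentiableOn (by norm_num)) w hw).hasFDerivWithinAt
  -- Lipschitz of fderivWithin
  have hDlipgen : ∀ (u : Spacetime → ℝ), ContDiffOn ℝ 2 u Slab →
      (∀ w ∈ Slab, ‖iteratedFDerivWithin ℝ 2 u Slab w‖ ≤ C₁) →
      ∀ w ∈ Slab, ∀ w' ∈ Slab,
      ‖fderivWithin ℝ u Slab w' - fderivWithin ℝ u Slab w‖ ≤ C₁ * ‖w' - w‖ := by
    intro u hu hu2 w hw w' hw'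
    have hiter : ∀ v ∈ Slab, ‖fderivWithin ℝ (fun y => fderivWithin ℝ u Slab y) Slab v‖ ≤ C₁ := by
      intro v hv
      apply ContinuousLinearMap.opNorm_le_bound _ (by linarith)
      intro m
      apply ContinuousLinearMap.opNorm_le_bound _ (by positivity)
      intro m'
      have h2 := iteratedFDerivWithin_two_apply u hUD hv ![m, m']
      have hm0 : (![m, m'] : Fin 2 → Spacetime) 0 = m := rfl
      have hm1 : (![m, m'] : Fin 2 → Spacetime) 1 = m' := rfl
      rw [hm0, hm1] at h2
      have h3 : ‖iteratedFDerivWithin ℝ 2 u Slab v ![m, m']‖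
          ≤ ‖iteratedFDerivWithin ℝ 2 u Slab v‖ * (‖m‖ * ‖m'‖) := by
        have h4 := (iteratedFDerivWithin ℝ 2 u Slab v).le_opNorm ![m, m']
        rw [Fin.prod_univ_two, hm0, hm1] at h4
        linarith [h4]
      rw [← h2]
      calc ‖iteratedFDerivWithin ℝ 2 u Slab v ![m, m']‖
          ≤ ‖iteratedFDerivWithin ℝ 2 u Slab v‖ * (‖m‖ * ‖m'‖) := h3
        _ ≤ C₁ * (‖m‖ * ‖m'‖) := by
            apply mul_le_mul_of_nonneg_right (hu2 v hv) (by positivity)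
        _ = C₁ * ‖m‖ * ‖m'‖ := by ring
    have hdiff2 : DifferentiableOn ℝ (fun y => fderivWithin ℝ u Slab y) Slab :=
      (hu.fderivWithin hUD (m := 1) (by norm_num)).differentiableOn one_ne_zero
    exact hconv.norm_image_sub_le_of_norm_hasFDerivWithin_le
      (fun v hv => (hdiff2 v hv).hasFDerivWithinAt) hiter hw hw'
  have hDlip : ∀ w ∈ Slab, ∀ w' ∈ Slab, ‖D w' - D w‖ ≤ C₁ * ‖w' - w‖ :=
    hDlipgen Φ hΦ hD2Φ
  have hDtlip : ∀ w ∈ Slab, ∀ w' ∈ Slab, ‖Dt w' - Dt w‖ ≤ C₁ * ‖w' - w‖ :=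
    hDlipgen Φt hΦt hD2Φt
  -- symbol facts
  have hoξ : IsOpen {ξ' : Sp | ξ' ≠ 0} := isOpen_ne
  have hadiff : ∀ w ∈ Slab, ∀ ξ : Sp, ξ ≠ 0 → DifferentiableAt ℝ (fun ξ' => a w ξ') ξ := by
    intro w hw ξ hξ
    have hz1 : w.1 ∈ Icc (-10:ℝ) 10 := (hmem w).1 hw
    have hopen : IsOpen {p : Sp × Sp | p.2 ≠ 0} :=
      isClosed_singleton.isOpen_compl.preimage continuous_snd
    have hFd : DifferentiableAt ℝ (fun p : Sp × Sp => a (w.1, p.1) p.2) (w.2, ξ) :=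
      ((hC1a w.1 hz1).differentiableOn one_ne_zero).differentiableAt (hopen.mem_nhds hξ)
    have hk : DifferentiableAt ℝ (fun ξ' : Sp => ((w.2, ξ') : Sp × Sp)) ξ :=
      (differentiableAt_const _).prodMk differentiableAt_id
    have h2 := DifferentiableAt.comp ξ hFd hk
    have e : ((fun p : Sp × Sp => a (w.1, p.1) p.2) ∘ (fun ξ' : Sp => ((w.2, ξ') : Sp × Sp)))
        = (fun ξ' => a w ξ') := by
      funext ξ'
      simp [Function.comp]
    rwa [e] at h2
  have hscale : ∀ w ∈ Slab, ∀ ξ : Sp, ξ ≠ 0 → ∀ c : ℝ, 0 < c →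
      fderiv ℝ (fun ξ' => a w ξ') (c • ξ) = fderiv ℝ (fun ξ' => a w ξ') ξ := by
    intro w hw ξ hξ c hc
    have hcs : HasFDerivAt (fun ξ' : Sp => c • ξ') (c • ContinuousLinearMap.id ℝ Sp) ξ :=
      (hasFDerivAt_id ξ).const_smul c
    have h1 : HasFDerivAt (fun ξ' : Sp => a w (c • ξ'))
        ((fderiv ℝ (fun ξ' => a w ξ') (c • ξ)).comp (c • ContinuousLinearMap.id ℝ Sp)) ξ :=
      ((hadiff w hw (c • ξ) (smul_ne_zero (ne_of_gt hc) hξ)).hasFDerivAt).comp ξ hcs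
    have h2 : HasFDerivAt (fun ξ' : Sp => c * a w ξ') (c • fderiv ℝ (fun ξ' => a w ξ') ξ) ξ :=
      ((hadiff w hw ξ hξ).hasFDerivAt).const_mul c
    have heq : (fun ξ' : Sp => a w (c • ξ')) =ᶠ[nhds ξ] (fun ξ' : Sp => c * a w ξ') := by
      filter_upwards [hoξ.mem_nhds hξ] with ξ' hξ'
      exact hHa w hw ξ' hξ' c hc
    have h1' : HasFDerivAt (fun ξ' : Sp => a w (c • ξ'))
        (c • fderiv ℝ (fun ξ' => a w ξ') ξ) ξ := h2.congr_of_eventuallyEq heq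
    have huniq := h1.unique h1'
    apply ContinuousLinearMap.ext
    intro v
    have hv := ContinuousLinearMap.ext_iff.1 huniq (c⁻¹ • v)
    simp only [ContinuousLinearMap.coe_comp', Function.comp_apply,
      ContinuousLinearMap.smul_apply, ContinuousLinearMap.coe_smul', Pi.smul_apply,
      ContinuousLinearMap.coe_id', id_eq] at hv
    rw [smul_smul, mul_inv_cancel₀ (ne_of_gt hc), one_smul,
      (fderiv ℝ (fun ξ' => a w ξ') ξ).map_smul] at hv
    rw [hv, smul_eq_mul, smul_eq_mul, ← mul_assoc, mul_inv_cancel₀ (ne_of_gt hc), one_mul]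
  have hopb : ∀ w ∈ Slab, ∀ ξ : Sp, ξ ≠ 0 → ‖fderiv ℝ (fun ξ' => a w ξ') ξ‖ ≤ C₁ := by
    intro w hw ξ hξ
    set u : Sp := ‖ξ‖⁻¹ • ξ with hu
    have hun : ‖u‖ = 1 := norm_smul_inv_norm hξ
    have hune : u ≠ 0 := by
      intro h; rw [h, norm_zero] at hun; norm_num at hun
    have hsc := hscale w hw u hune ‖ξ‖ (norm_pos_iff.2 hξ)
    have hx : ‖ξ‖ • u = ξ := by
      rw [hu, smul_smul, mul_inv_cancel₀ (norm_ne_zero_iff.2 hξ), one_smul]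
    rw [← hx, hsc]
    have h2 := opnorm_le_norm_vec2 (fderiv ℝ (fun ξ' => a w ξ') u)
    have h3 : vec2 (fun j => fderiv ℝ (fun ξ' => a w ξ') u (EuclideanSpace.single j 1))
        = gradXi a w u := rfl
    rw [h3] at h2
    exact h2.trans (hGb w hw u hun)
  have hamv : ∀ w ∈ Slab, ∀ ξ η : Sp, 1/2 ≤ ‖ξ‖ → 1/2 ≤ ‖η‖ → ‖ξ - η‖ ≤ 1/2 →
      |a w ξ - a w η| ≤ C₁ * ‖ξ - η‖ := by
    intro w hw ξ η h1 h2 h3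
    have hseg : ∀ θ ∈ segment ℝ η ξ, θ ≠ 0 := by
      rintro θ ⟨p, q, hp, hq, hpq, rfl⟩
      have hp1 : p = 1 - q := by linarith
      subst hp1
      have hn : (1:ℝ)/4 ≤ ‖(1 - q) • η + q • ξ‖ := by
        rcases le_total q (1/2) with hq2|hq2
        · have e : (1 - q) • η + q • ξ = η + q • (ξ - η) := by module
          rw [e]
          have h4 : ‖q • (ξ - η)‖ ≤ 1/4 := by
            rw [norm_smul, Real.norm_eq_abs, abs_of_nonneg hq]
            nlinarith
          have h5 : ‖η‖ ≤ ‖η + q • (ξ - η)‖ + ‖q • (ξ - η)‖ := by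
            calc ‖η‖ = ‖(η + q • (ξ - η)) - q • (ξ - η)‖ := by rw [add_sub_cancel_right]
              _ ≤ ‖η + q • (ξ - η)‖ + ‖q • (ξ - η)‖ := norm_sub_le _ _
          linarith
        · have e : (1 - q) • η + q • ξ = ξ + (1 - q) • (η - ξ) := by module
          rw [e]
          have h4 : ‖(1 - q) • (η - ξ)‖ ≤ 1/4 := by
            rw [norm_smul, Real.norm_eq_abs, abs_of_nonneg (by linarith), norm_sub_rev]
            nlinarith
          have h5 : ‖ξ‖ ≤ ‖ξ + (1 - q) • (η - ξ)‖ + ‖(1 - q) • (η - ξ)‖ := by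
            calc ‖ξ‖ = ‖(ξ + (1 - q) • (η - ξ)) - (1 - q) • (η - ξ)‖ := by
                  rw [add_sub_cancel_right]
              _ ≤ ‖ξ + (1 - q) • (η - ξ)‖ + ‖(1 - q) • (η - ξ)‖ := norm_sub_le _ _
          linarith
      intro h0
      rw [h0, norm_zero] at hn
      linarith
    have := (convex_segment η ξ).norm_image_sub_le_of_norm_hasFDerivWithin_le (C := C₁)
      (f := fun ξ' => a w ξ') (f' := fun θ => fderiv ℝ (fun ξ' => a w ξ') θ)
      (fun θ hθ => ((hadiff w hw θ (hseg θ hθ)).hasFDerivAt).hasFDerivWithinAt)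
      (fun θ hθ => hopb w hw θ (hseg θ hθ)) (left_mem_segment ℝ η ξ) (right_mem_segment ℝ η ξ)
    rw [Real.norm_eq_abs] at this
    exact this
  have haeuler : ∀ w ∈ Slab, ∀ ξ : Sp, ξ ≠ 0 → |a w ξ| ≤ C₁ * ‖ξ‖ := by
    intro w hw ξ hξ
    have hc : HasDerivAt (fun c : ℝ => c • ξ) ξ 1 := by
      simpa using (hasDerivAt_id (1:ℝ)).smul_const ξ
    have h1 : HasDerivAt (fun c : ℝ => a w (c • ξ)) (fderiv ℝ (fun ξ' => a w ξ') ξ ξ) 1 :=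
      ((hadiff w hw ξ hξ).hasFDerivAt).comp_hasDerivAt_of_eq 1 hc (one_smul ℝ ξ).symm
    have h2 : HasDerivAt (fun c : ℝ => c * a w ξ) (a w ξ) 1 := by
      simpa using (hasDerivAt_id (1:ℝ)).mul_const (a w ξ)
    have heq : (fun c : ℝ => a w (c • ξ)) =ᶠ[nhds 1] (fun c : ℝ => c * a w ξ) := by
      filter_upwards [isOpen_Ioi.mem_nhds (show (0:ℝ) < 1 by norm_num)] with c hc'
      exact hHa w hw ξ hξ c hc'
    have h1' : HasDerivAt (fun c : ℝ => a w (c • ξ)) (a w ξ) 1 :=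
      h2.congr_of_eventuallyEq heq
    have he : a w ξ = fderiv ℝ (fun ξ' => a w ξ') ξ ξ := h1'.unique h1
    rw [he]
    calc |fderiv ℝ (fun ξ' => a w ξ') ξ ξ| ≤ ‖fderiv ℝ (fun ξ' => a w ξ') ξ‖ * ‖ξ‖ :=
          (fderiv ℝ (fun ξ' => a w ξ') ξ).le_opNorm ξ
      _ ≤ C₁ * ‖ξ‖ := mul_le_mul_of_nonneg_right (hopb w hw ξ hξ) (norm_nonneg ξ)
  -- the difference function and its derivatives
  set ψ : ℝ → Sp → ℝ := fun s x => Φ (s, x) - Φt (s, x) with hψ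
  set gψ : Spacetime → Sp := fun w => gradxW Φ w - gradxW Φt w with hgψ
  have hgψvec : ∀ w : Spacetime, gψ w = vec2 (fun j => (D w - Dt w) ((0:ℝ), EuclideanSpace.single j 1)) := by
    intro w; rfl
  have hgψle : ∀ w ∈ Slab, ‖gψ w‖ ≤ 1/2 := fun w hw => hgd w hw
  -- time derivative identity and bounds
  have hdtval : ∀ w ∈ Slab, (D w - Dt w) ((1:ℝ), (0:Sp)) =
      aTld w (gradxW Φt w) - a w (gradxW Φ w) := by
    intro w hw
    have h1 := heik w hw
    have h2 := heikt w hw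
    rw [ContinuousLinearMap.sub_apply]
    have e1 : D w ((1:ℝ),(0:Sp)) = dtW Φ w := rfl
    have e2 : Dt w ((1:ℝ),(0:Sp)) = dtW Φt w := rfl
    rw [e1, e2]
    linarith
  have hpt : ∀ w ∈ Slab, |(D w - Dt w) ((1:ℝ), (0:Sp))| ≤ 2*δ + C₁ * ‖gψ w‖ := by
    intro w hw
    rw [hdtval w hw]
    have h1 := hab w hw (gradxW Φt w)
    have h2 : |a w (gradxW Φt w) - a w (gradxW Φ w)| ≤ C₁ * ‖gradxW Φt w - gradxW Φ w‖ := by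
      apply hamv w hw _ _ (hgΦt w hw).1 (hgΦ w hw).1
      rw [norm_sub_rev]
      exact hgd w hw
    have h3 : ‖gradxW Φt w - gradxW Φ w‖ = ‖gψ w‖ := by
      rw [hgψ]
      exact norm_sub_rev _ _
    rw [h3] at h2
    have h4 : |aTld w (gradxW Φt w) - a w (gradxW Φ w)|
        ≤ |aTld w (gradxW Φt w) - a w (gradxW Φt w)| + |a w (gradxW Φt w) - a w (gradxW Φ w)| := by
      have := abs_sub_le (aTld w (gradxW Φt w)) (a w (gradxW Φt w)) (a w (gradxW Φ w))
      exact this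
    have h5 : |aTld w (gradxW Φt w) - a w (gradxW Φt w)| ≤ δ * ‖gradxW Φt w‖ := by
      rw [abs_sub_comm]; exact h1
    have h6 : δ * ‖gradxW Φt w‖ ≤ 2*δ := by
      have := (hgΦt w hw).2
      nlinarith
    linarith
  have hglob : ∀ w ∈ Slab, |(D w - Dt w) ((1:ℝ), (0:Sp))| ≤ 2*δ + C₁ := by
    intro w hw
    have := hpt w hw
    have h2 := hgψle w hw
    nlinarith
  -- time slices
  have hsliceT : ∀ (s : ℝ) (x : Sp), s ∈ Icc (-10:ℝ) 10 →
      HasDerivWithinAt (fun s' : ℝ => ψ s' x) ((D (s,x) - Dt (s,x)) ((1:ℝ), (0:Sp)))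
        (Icc (-10:ℝ) 10) s := by
    intro s x hs
    have hz : ((s,x):Spacetime) ∈ Slab := hmem' s x hs
    have hcurve : HasDerivWithinAt (fun s' : ℝ => ((s', x) : Spacetime)) ((1:ℝ), (0:Sp))
        (Icc (-10:ℝ) 10) s :=
      ((hasDerivAt_id s).prodMk (hasDerivAt_const s x)).hasDerivWithinAt
    have hψd : HasFDerivWithinAt (fun w => Φ w - Φt w) (D (s,x) - Dt (s,x)) Slab (s,x) :=
      (hDF _ hz).sub (hDtF _ hz)
    have := hψd.comp_hasDerivWithinAt s hcurve (fun s' hs' => hmem' s' x hs')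
    exact this
  -- spatial slices
  have hsliceX : ∀ (s : ℝ) (x : Sp), s ∈ Icc (-10:ℝ) 10 →
      HasFDerivAt (fun y : Sp => ψ s y)
        ((D (s,x) - Dt (s,x)).comp (ContinuousLinearMap.inr ℝ ℝ Sp)) x := by
    intro s x hs
    have hz : ((s,x):Spacetime) ∈ Slab := hmem' s x hs
    have hψd : HasFDerivWithinAt (fun w => Φ w - Φt w) (D (s,x) - Dt (s,x)) Slab (s,x) :=
      (hDF _ hz).sub (hDtF _ hz)
    have hemb : HasFDerivAt (fun y : Sp => ((s, y) : Spacetime))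
        (ContinuousLinearMap.inr ℝ ℝ Sp) x := by
      have h1 := (hasFDerivAt_const (𝕜 := ℝ) s x).prodMk (hasFDerivAt_id (𝕜 := ℝ) x)
      exact h1
    have h2 := hψd.comp x (hemb.hasFDerivWithinAt (s := univ)) (fun y _ => hmem' s y hs)
    exact hasFDerivWithinAt_univ.1 h2
  have hcompval : ∀ (w : Spacetime) (y : Sp),
      ((D w - Dt w).comp (ContinuousLinearMap.inr ℝ ℝ Sp)) y = (D w - Dt w) ((0:ℝ), y) := by
    intro w y; rfl
  have hcompnorm : ∀ w : Spacetime,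
      ‖(D w - Dt w).comp (ContinuousLinearMap.inr ℝ ℝ Sp)‖ ≤ ‖gψ w‖ := by
    intro w
    have h1 := opnorm_le_norm_vec2 ((D w - Dt w).comp (ContinuousLinearMap.inr ℝ ℝ Sp))
    rw [hgψvec w]
    convert h1 using 3
    rfl
  -- Lipschitz in x
  have hlipψ : ∀ s ∈ Icc (-10:ℝ) 10, ∀ x y : Sp, |ψ s x - ψ s y| ≤ ‖x - y‖ := by
    intro s hs x y
    have := convex_univ.norm_image_sub_le_of_norm_hasFDerivWithin_le
      (C := 1) (f := fun y : Sp => ψ s y)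
      (f' := fun y : Sp => (D (s,y) - Dt (s,y)).comp (ContinuousLinearMap.inr ℝ ℝ Sp))
      (fun y _ => (hsliceX s y hs).hasFDerivWithinAt) ?_ (mem_univ y) (mem_univ x)
    · rw [Real.norm_eq_abs] at this
      calc |ψ s x - ψ s y| ≤ 1 * ‖x - y‖ := this
        _ = ‖x - y‖ := one_mul _
    · intro v _
      exact (hcompnorm (s,v)).trans ((hgψle (s,v) (hmem' s v hs)).trans (by norm_num))
  -- Lipschitz in t
  set K : ℝ := 10 * (2*δ + C₁) + 1 with hK
  have hKpos : 1 ≤ K := by nlinarith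
  have htlipψ : ∀ s ∈ Icc (-10:ℝ) 10, ∀ u ∈ Icc (-10:ℝ) 10, ∀ x : Sp,
      |ψ u x - ψ s x| ≤ (2*δ + C₁) * |u - s| := by
    intro s hs u hu x
    have := (convex_Icc (-10:ℝ) 10).norm_image_sub_le_of_norm_hasDerivWithin_le
      (C := 2*δ + C₁) (f := fun s' : ℝ => ψ s' x)
      (f' := fun s' : ℝ => (D (s',x) - Dt (s',x)) ((1:ℝ), (0:Sp)))
      (fun s' hs' => hsliceT s' x hs') ?_ hs hu
    · rw [Real.norm_eq_abs, Real.norm_eq_abs] at this; exact this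
    · intro s' hs'
      rw [Real.norm_eq_abs]
      exact hglob (s',x) (hmem' s' x hs')
  -- bound on ψ
  have hψ0 : ∀ x : Sp, ψ 0 x = 0 := fun x => by simp [hψ, hinit x]
  have hbdψ : ∀ s ∈ Icc (-10:ℝ) 10, ∀ x : Sp, |ψ s x| ≤ K := by
    intro s hs x
    have h1 := htlipψ 0 (by norm_num) s hs x
    rw [hψ0 x] at h1
    have : |s - 0| ≤ 10 := by rw [sub_zero, abs_le]; exact ⟨hs.1, hs.2⟩
    rw [sub_zero] at h1
    have hd0 : 0 ≤ 2*δ + C₁ := by linarith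
    nlinarith
  -- time Lipschitz of gψ along vertical lines
  have hgψlip : ∀ w ∈ Slab, ∀ w' ∈ Slab, ‖gψ w' - gψ w‖ ≤ 4*C₁*‖w' - w‖ := by
    intro w hw w' hw'
    have e : gψ w' - gψ w
        = vec2 (fun j => ((D w' - Dt w') - (D w - Dt w)) ((0:ℝ), EuclideanSpace.single j 1)) := by
      rw [hgψvec w', hgψvec w]
      rfl
    rw [e]
    have hM : ∀ j : Fin 2,
        |((D w' - Dt w') - (D w - Dt w)) ((0:ℝ), EuclideanSpace.single j 1)| ≤ 2*C₁*‖w' - w‖ := by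
      intro j
      have hn1 : ‖((0:ℝ), EuclideanSpace.single j (1:ℝ))‖ = 1 := by
        rw [Prod.norm_def]
        simp
      have h1 := ((D w' - Dt w') - (D w - Dt w)).le_opNorm ((0:ℝ), EuclideanSpace.single j 1)
      rw [hn1, mul_one] at h1
      have h2 : ‖(D w' - Dt w') - (D w - Dt w)‖ ≤ 2*C₁*‖w' - w‖ := by
        have e2 : (D w' - Dt w') - (D w - Dt w) = (D w' - D w) - (Dt w' - Dt w) := by
          abel
        rw [e2]
        calc ‖(D w' - D w) - (Dt w' - Dt w)‖ ≤ ‖D w' - D w‖ + ‖Dt w' - Dt w‖ := norm_sub_le _ _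
          _ ≤ C₁ * ‖w' - w‖ + C₁ * ‖w' - w‖ := add_le_add (hDlip w hw w' hw') (hDtlip w hw w' hw')
          _ = 2*C₁*‖w' - w‖ := by ring
      exact (h1.trans h2)
    have := norm_vec2_le (M := 2*C₁*‖w' - w‖) (by positivity) hM
    calc ‖vec2 fun j => ((D w' - Dt w') - (D w - Dt w)) ((0:ℝ), EuclideanSpace.single j 1)‖
        ≤ 2 * (2*C₁*‖w' - w‖) := this
      _ = 4*C₁*‖w' - w‖ := by ring
  -- core estimate
  have hcore : ∀ t ∈ Icc (-10:ℝ) 10, ∀ xb : Sp, ∀ r : ℝ, 0 ≤ r → ‖gψ (t, xb)‖ ≤ r →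
      ∀ s ∈ Icc (-10:ℝ) 10, |ψ s xb - ψ t xb| ≤ |s - t| * (2*δ + C₁*r + (4*C₁^2) * |s - t|) := by
    intro t ht xb r hr hgr s hs
    have hJ : uIcc s t ⊆ Icc (-10:ℝ) 10 := by
      rw [uIcc]
      exact Icc_subset_Icc (le_inf hs.1 ht.1) (sup_le hs.2 ht.2)
    have hJd : ∀ s' ∈ uIcc s t, |s' - t| ≤ |s - t| := by
      intro s' hs'
      rcases le_total s t with h|h
      · rw [uIcc_of_le h] at hs'
        rw [abs_of_nonpos (by linarith [hs'.2]), abs_of_nonpos (by linarith)]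
        linarith [hs'.1]
      · rw [uIcc_of_ge h] at hs'
        rw [abs_of_nonneg (by linarith [hs'.1]), abs_of_nonneg (by linarith)]
        linarith [hs'.2]
    have hbound : ∀ s' ∈ uIcc s t,
        |(D (s',xb) - Dt (s',xb)) ((1:ℝ),(0:Sp))| ≤ 2*δ + C₁*r + (4*C₁^2)*|s - t| := by
      intro s' hs'
      have hs'I := hJ hs'
      have h1 := hpt (s',xb) (hmem' s' xb hs'I)
      have hdist : ‖((s',xb) : Spacetime) - ((t,xb) : Spacetime)‖ = |s' - t| := by
        have e : ((s',xb) : Spacetime) - ((t,xb) : Spacetime) = ((s' - t, 0) : Spacetime) := by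
          rw [Prod.mk_sub_mk, sub_self]
        rw [e, Prod.norm_def]
        simp
      have h2 : ‖gψ (s',xb)‖ ≤ ‖gψ (t,xb)‖ + 4*C₁*|s' - t| := by
        have h3 := hgψlip (t,xb) (hmem' t xb ht) (s',xb) (hmem' s' xb hs'I)
        rw [hdist] at h3
        calc ‖gψ (s',xb)‖ = ‖gψ (t,xb) + (gψ (s',xb) - gψ (t,xb))‖ := by rw [add_sub_cancel]
          _ ≤ ‖gψ (t,xb)‖ + ‖gψ (s',xb) - gψ (t,xb)‖ := norm_add_le _ _
          _ ≤ ‖gψ (t,xb)‖ + 4*C₁*|s' - t| := by linarith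
      have h4 := hJd s' hs'
      have h5 : ‖gψ (s',xb)‖ ≤ r + 4*C₁*|s - t| := by nlinarith
      calc |(D (s',xb) - Dt (s',xb)) ((1:ℝ),(0:Sp))| ≤ 2*δ + C₁ * ‖gψ (s',xb)‖ := h1
        _ ≤ 2*δ + C₁ * (r + 4*C₁*|s - t|) := by nlinarith
        _ = 2*δ + C₁*r + (4*C₁^2)*|s - t| := by ring
    have := (convex_uIcc s t).norm_image_sub_le_of_norm_hasDerivWithin_le
      (C := 2*δ + C₁*r + (4*C₁^2)*|s - t|) (f := fun s' => ψ s' xb)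
      (f' := fun s' => (D (s',xb) - Dt (s',xb)) ((1:ℝ),(0:Sp)))
      (fun s' hs' => (hsliceT s' xb (hJ hs')).mono hJ)
      (fun s' hs' => by rw [Real.norm_eq_abs]; exact hbound s' hs')
      (right_mem_uIcc) (left_mem_uIcc)
    rw [Real.norm_eq_abs, Real.norm_eq_abs] at this
    calc |ψ s xb - ψ t xb| ≤ (2*δ + C₁*r + (4*C₁^2)*|s - t|) * |s - t| := this
      _ = |s - t| * (2*δ + C₁*r + (4*C₁^2)*|s - t|) := by ring
  -- B constant
  set B : ℝ := 2*C₁*Real.sqrt (2*K) + 4*C₁^2 with hB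
  have hBpos : 0 < B := by positivity
  -- the max condition gives small gradient
  have hmaxsmall : ∀ ε : ℝ, 0 < ε → ∀ t ∈ Icc (-10:ℝ) 10, ∀ xb : Sp,
      ‖gψ (t,xb)‖ = 2*ε*‖xb‖ → ε * ‖xb‖^2 ≤ 2*K → ∀ s ∈ Icc (-10:ℝ) 10,
      |ψ s xb - ψ t xb| ≤ |s - t| * (2*δ + B * Real.sqrt ε + B * |s - t|) := by
    intro ε hε t ht xb hno hb2 s hs
    have hr : ‖gψ (t,xb)‖ ≤ 2 * Real.sqrt (2*K) * Real.sqrt ε := by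
      rw [hno]
      have h1 : (ε*‖xb‖)^2 ≤ (2*K) * ε := by nlinarith [norm_nonneg xb]
      have h2 : ε*‖xb‖ ≤ Real.sqrt ((2*K)*ε) := by
        rw [← Real.sqrt_sq (by positivity : (0:ℝ) ≤ ε*‖xb‖)]
        exact Real.sqrt_le_sqrt h1
      rw [Real.sqrt_mul (by nlinarith) ε] at h2
      linarith
    have := hcore t ht xb (2 * Real.sqrt (2*K) * Real.sqrt ε) (by positivity) hr s hs
    apply this.trans
    apply mul_le_mul_of_nonneg_left _ (abs_nonneg _)
    have hsq : 0 ≤ Real.sqrt ε := Real.sqrt_nonneg ε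
    have habs : 0 ≤ |s - t| := abs_nonneg _
    rw [hB]
    nlinarith [mul_nonneg (by positivity : (0:ℝ) ≤ 4*C₁^2) hsq,
      mul_nonneg (by positivity : (0:ℝ) ≤ 2*C₁*Real.sqrt (2*K)) habs]
  -- apply the abstract lemma to ψ
  have happly : ∀ t ∈ Icc (-10:ℝ) 10, ∀ x : Sp, ψ t x ≤ (2*δ) * |t| := by
    apply abstract_transport (K := K) (by linarith) hBpos hKpos ψ hψ0 hlipψ
    · intro s hs u hu x
      calc |ψ u x - ψ s x| ≤ (2*δ + C₁) * |u - s| := htlipψ s hs u hu x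
        _ ≤ K * |u - s| := by
          apply mul_le_mul_of_nonneg_right _ (abs_nonneg _)
          nlinarith
    · intro ε hε hε1 t ht xb hmax s hs
      have hzS' : ((t,xb) : Spacetime) ∈ Slab := hmem' t xb ht
      have hL := hsliceX t xb ht
      have hLw := max_grad hL hmax
      have hno : ‖gψ (t,xb)‖ = 2*ε*‖xb‖ := by
        have hvec : gψ (t,xb) = (2*ε) • xb := by
          rw [hgψvec (t,xb)]
          ext j
          rw [vec2_apply]
          have h5 := hLw (EuclideanSpace.single j 1)
          rw [hcompval] at h5
          have h6 : inner (𝕜 := ℝ) xb (EuclideanSpace.single j (1:ℝ)) = xb j := by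
            rw [EuclideanSpace.inner_single_right]
            simp
          rw [h6] at h5
          rw [h5]
          simp [PiLp.smul_apply, smul_eq_mul]
        rw [hvec, norm_smul, Real.norm_eq_abs, abs_of_pos (by positivity)]
      have hb2 : ε * ‖xb‖^2 ≤ 2*K := by
        have h1 := hmax (mem_univ (0:Sp))
        simp only [norm_zero] at h1
        have h2 := hbdψ t ht xb
        have h3 := hbdψ t ht 0
        have h4 : ψ t 0 - ε * 0^2 ≤ ψ t xb - ε*‖xb‖^2 := by
          simpa using h1
        nlinarith [abs_le.1 h2, abs_le.1 h3]
      exact hmaxsmall ε hε t ht xb hno hb2 s hs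
  -- apply the abstract lemma to -ψ
  have happly' : ∀ t ∈ Icc (-10:ℝ) 10, ∀ x : Sp, -ψ t x ≤ (2*δ) * |t| := by
    apply abstract_transport (K := K) (by linarith) hBpos hKpos (fun s x => -ψ s x)
    · intro x
      rw [hψ0 x]
      ring
    · intro s hs x y
      have e : -ψ s x - -ψ s y = ψ s y - ψ s x := by ring
      show |-ψ s x - -ψ s y| ≤ ‖x - y‖
      rw [e, norm_sub_rev]
      exact hlipψ s hs y x
    · intro s hs u hu x
      show |-ψ u x - -ψ s x| ≤ K * |u - s|
      have e : -ψ u x - -ψ s x = ψ s x - ψ u x := by ring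
      rw [e, abs_sub_comm]
      calc |ψ u x - ψ s x| ≤ (2*δ + C₁) * |u - s| := htlipψ s hs u hu x
        _ ≤ K * |u - s| := by
          apply mul_le_mul_of_nonneg_right _ (abs_nonneg _)
          nlinarith
    · intro ε hε hε1 t ht xb hmax s hs
      have hzS' : ((t,xb) : Spacetime) ∈ Slab := hmem' t xb ht
      have hL := (hsliceX t xb ht).neg
      have hLw := max_grad hL hmax
      have hno : ‖gψ (t,xb)‖ = 2*ε*‖xb‖ := by
        have hvec : gψ (t,xb) = (-(2*ε)) • xb := by
          rw [hgψvec (t,xb)]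
          ext j
          rw [vec2_apply]
          have h5 := hLw (EuclideanSpace.single j 1)
          rw [ContinuousLinearMap.neg_apply, hcompval] at h5
          have h6 : inner (𝕜 := ℝ) xb (EuclideanSpace.single j (1:ℝ)) = xb j := by
            rw [EuclideanSpace.inner_single_right]
            simp
          rw [h6] at h5
          have h7 : (D (t,xb) - Dt (t,xb)) ((0:ℝ), EuclideanSpace.single j 1)
              = -(2*ε*xb j) := by linarith
          rw [h7]
          simp [PiLp.smul_apply, smul_eq_mul]
        rw [hvec, norm_smul, Real.norm_eq_abs, abs_neg, abs_of_pos (by positivity)]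
      have hb2 : ε * ‖xb‖^2 ≤ 2*K := by
        have h1 := hmax (mem_univ (0:Sp))
        simp only [norm_zero] at h1
        have h2 := hbdψ t ht xb
        have h3 := hbdψ t ht 0
        have h4 : -ψ t 0 - ε * 0^2 ≤ -ψ t xb - ε*‖xb‖^2 := by
          simpa using h1
        nlinarith [abs_le.1 h2, abs_le.1 h3]
      have hfin := hmaxsmall ε hε t ht xb hno hb2 s hs
      show |-ψ s xb - -ψ t xb| ≤ |s - t| * (2*δ + B * Real.sqrt ε + B * |s - t|)
      have e : -ψ s xb - -ψ t xb = -(ψ s xb - ψ t xb) := by ring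
      rw [e, abs_neg]
      exact hfin
  -- conclude
  have hz1 : z.1 ∈ Icc (-10:ℝ) 10 := (hmem z).1 hzS
  have h1 := happly z.1 hz1 z.2
  have h2 := happly' z.1 hz1 z.2
  have hzeta : Φ z - Φt z = ψ z.1 z.2 := by
    show Φ z - Φt z = Φ (z.1, z.2) - Φt (z.1, z.2)
    rw [Prod.mk.eta]
  rw [hzeta, abs_le]
  constructor
  · linarith
  · linarith
end
end

section
/- Microellipticity of one-homogeneous symbols at angular separation: Let n ≥ 2 and let a : ℝⁿ ∖ {0} → ℝ be smooth, positively homogeneous of degree 1, with a(ξ) > 0 for all ξ ≠ 0, and suppose there is c₀ > 0 such that for every unit vector ω and every v ⊥ ω one has ⟨a''(ω) v, v⟩ ≥ c₀ |v|², where a''(ω) denotes the Hessian of a at ω. Then there exist constants c, C > 0, depending only on a, such that for every unit vector ω and every ξ ≠ 0: c |ξ| ∠(ξ, ω)² ≤ a(ξ) − ⟨∇a(ω), ξ⟩ ≤ C |ξ| ∠(ξ, ω)², where ∠(ξ, ω) ∈ [0, π] is the angle between ξ and ω. -/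
open scoped RealInnerProductSpace
noncomputable section

private lemma micro_chord {E : Type*} [NormedAddCommGroup E] [InnerProductSpace ℝ E]
    {u ω : E} (hu : ‖u‖ = 1) (hω : ‖ω‖ = 1) :
    (4 / Real.pi ^ 2) * InnerProductGeometry.angle u ω ^ 2 ≤ ‖u - ω‖ ^ 2 ∧
      ‖u - ω‖ ^ 2 ≤ InnerProductGeometry.angle u ω ^ 2 := by
  set θ := InnerProductGeometry.angle u ω with hθ
  have hθ0 : 0 ≤ θ := InnerProductGeometry.angle_nonneg u ω
  have hθπ : θ ≤ Real.pi := InnerProductGeometry.angle_le_pi u ω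
  have hcos : Real.cos θ = ⟪u, ω⟫ := by
    rw [hθ, InnerProductGeometry.cos_angle, hu, hω]; ring_nf
  have hchord : ‖u - ω‖ ^ 2 = 2 - 2 * Real.cos θ := by
    rw [hcos, @norm_sub_sq_real]
    rw [hu, hω]; ring
  have hsin : 2 - 2 * Real.cos θ = 4 * Real.sin (θ / 2) ^ 2 := by
    have := Real.sin_sq_eq_half_sub (θ / 2)
    have h2 : 2 * (θ / 2) = θ := by ring
    rw [h2] at this
    linarith
  constructor
  · -- lower bound via Jordan's inequality
    have hhalf : θ / 2 ≤ Real.pi / 2 := by linarith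
    have hj := Real.mul_le_sin (by linarith : (0:ℝ) ≤ θ / 2) hhalf
    have hπ : 0 < Real.pi := Real.pi_pos
    have h1 : (2 / Real.pi * (θ / 2)) ^ 2 ≤ Real.sin (θ / 2) ^ 2 :=
      pow_le_pow_left₀ (mul_nonneg (by positivity) (by linarith)) hj 2
    have h2 : (2 / Real.pi * (θ / 2)) ^ 2 = θ ^ 2 / Real.pi ^ 2 := by
      field_simp
    rw [hchord, hsin]
    rw [h2] at h1
    have : 4 * (θ ^ 2 / Real.pi ^ 2) ≤ 4 * Real.sin (θ / 2) ^ 2 := by linarith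
    calc 4 / Real.pi ^ 2 * θ ^ 2 = 4 * (θ ^ 2 / Real.pi ^ 2) := by ring
      _ ≤ 4 * Real.sin (θ / 2) ^ 2 := this
  · -- upper bound via sin x ≤ x
    have hs := Real.sin_le (by linarith : (0:ℝ) ≤ θ / 2)
    have hsn := Real.sin_nonneg_of_nonneg_of_le_pi (by linarith : (0:ℝ) ≤ θ/2) (by linarith)
    rw [hchord, hsin]
    nlinarith



/-- Monotonicity helper. -/
private lemma micro_monoOn {f f' : ℝ → ℝ} (hf : ∀ t, HasDerivAt f (f' t) t)
    (hd : ∀ t ∈ Set.Ioo (0:ℝ) 1, 0 ≤ f' t) : MonotoneOn f (Set.Icc (0:ℝ) 1) := by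
  apply monotoneOn_of_deriv_nonneg (convex_Icc 0 1)
  · exact (continuous_iff_continuousAt.2 fun t => (hf t).continuousAt).continuousOn
  · intro x hx
    exact (hf x).differentiableAt.differentiableWithinAt
  · intro x hx
    rw [interior_Icc] at hx
    rw [(hf x).deriv]
    exact hd x hx

/-- Quadratic bound helper: if `f 0 = 0`, `f' 0 = 0` and `m ≤ f'' ≤ M` on `[0,1]`,
then `m/2 ≤ f 1 ≤ M/2`. -/
private lemma micro_quad {f f' f'' : ℝ → ℝ} {m M : ℝ}
    (hf : ∀ t, HasDerivAt f (f' t) t) (hf' : ∀ t, HasDerivAt f' (f'' t) t)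
    (h0 : f 0 = 0) (h0' : f' 0 = 0)
    (hm : ∀ t ∈ Set.Icc (0:ℝ) 1, m ≤ f'' t) (hM : ∀ t ∈ Set.Icc (0:ℝ) 1, f'' t ≤ M) :
    m / 2 ≤ f 1 ∧ f 1 ≤ M / 2 := by
  have hsq : ∀ (r : ℝ) (t : ℝ), HasDerivAt (fun s : ℝ => r * (s ^ 2 / 2)) (r * t) t := by
    intro r t
    have h := (hasDerivAt_pow 2 t).div_const 2
    have h2 := h.const_mul r
    simpa [mul_comm, mul_assoc] using h2
  constructor
  · -- lower bound
    set g : ℝ → ℝ := fun t => f t - m * (t ^ 2 / 2) with hg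
    set g' : ℝ → ℝ := fun t => f' t - m * t with hg'
    have hgd : ∀ t, HasDerivAt g (g' t) t := fun t => (hf t).sub (hsq m t)
    have hg'd : ∀ t, HasDerivAt g' (f'' t - m) t := by
      intro t
      exact ((hf' t).sub ((hasDerivAt_id t).const_mul m)).congr_deriv (by ring)
    have hg'mono : MonotoneOn g' (Set.Icc (0:ℝ) 1) :=
      micro_monoOn hg'd (fun t ht => sub_nonneg.2 (hm t ⟨le_of_lt ht.1, le_of_lt ht.2⟩))
    have hg'nn : ∀ t ∈ Set.Ioo (0:ℝ) 1, 0 ≤ g' t := by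
      intro t ht
      have := hg'mono (Set.mem_Icc.2 ⟨le_refl 0, zero_le_one⟩)
        (Set.mem_Icc.2 ⟨le_of_lt ht.1, le_of_lt ht.2⟩) (le_of_lt ht.1)
      simpa [hg', h0'] using this
    have hgmono : MonotoneOn g (Set.Icc (0:ℝ) 1) := micro_monoOn hgd hg'nn
    have := hgmono (Set.mem_Icc.2 ⟨le_refl 0, zero_le_one⟩)
      (Set.mem_Icc.2 ⟨zero_le_one, le_refl 1⟩) zero_le_one
    simp only [hg, h0] at this
    linarith [this]
  · -- upper bound
    set g : ℝ → ℝ := fun t => M * (t ^ 2 / 2) - f t with hg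
    set g' : ℝ → ℝ := fun t => M * t - f' t with hg'
    have hgd : ∀ t, HasDerivAt g (g' t) t := fun t => (hsq M t).sub (hf t)
    have hg'd : ∀ t, HasDerivAt g' (M - f'' t) t := by
      intro t
      exact (((hasDerivAt_id t).const_mul M).sub (hf' t)).congr_deriv (by ring)
    have hg'mono : MonotoneOn g' (Set.Icc (0:ℝ) 1) :=
      micro_monoOn hg'd (fun t ht => sub_nonneg.2 (hM t ⟨le_of_lt ht.1, le_of_lt ht.2⟩))
    have hg'nn : ∀ t ∈ Set.Ioo (0:ℝ) 1, 0 ≤ g' t := by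
      intro t ht
      have := hg'mono (Set.mem_Icc.2 ⟨le_refl 0, zero_le_one⟩)
        (Set.mem_Icc.2 ⟨le_of_lt ht.1, le_of_lt ht.2⟩) (le_of_lt ht.1)
      simpa [hg', h0'] using this
    have hgmono : MonotoneOn g (Set.Icc (0:ℝ) 1) := micro_monoOn hgd hg'nn
    have := hgmono (Set.mem_Icc.2 ⟨le_refl 0, zero_le_one⟩)
      (Set.mem_Icc.2 ⟨zero_le_one, le_refl 1⟩) zero_le_one
    simp only [hg, h0] at this
    linarith [this]

variable {n : ℕ} {a : EuclideanSpace ℝ (Fin n) → ℝ}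

private lemma micro_cda (hsmooth : ContDiffOn ℝ (⊤ : ℕ∞) a {ξ : EuclideanSpace ℝ (Fin n) | ξ ≠ 0})
    {x : EuclideanSpace ℝ (Fin n)} (hx : x ≠ 0) : ContDiffAt ℝ (⊤ : ℕ∞) a x :=
  hsmooth.contDiffAt (isOpen_ne.mem_nhds hx)

private lemma micro_da (hsmooth : ContDiffOn ℝ (⊤ : ℕ∞) a {ξ : EuclideanSpace ℝ (Fin n) | ξ ≠ 0})
    {x : EuclideanSpace ℝ (Fin n)} (hx : x ≠ 0) : DifferentiableAt ℝ a x :=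
  (micro_cda hsmooth hx).differentiableAt (by simp)

private lemma micro_dfa (hsmooth : ContDiffOn ℝ (⊤ : ℕ∞) a {ξ : EuclideanSpace ℝ (Fin n) | ξ ≠ 0})
    {x : EuclideanSpace ℝ (Fin n)} (hx : x ≠ 0) : DifferentiableAt ℝ (fderiv ℝ a) x := by
  have h := (micro_cda hsmooth hx).fderiv_right (m := 1) (WithTop.coe_le_coe.2 le_top)
  exact h.differentiableAt one_ne_zero

private lemma micro_curve (p w : EuclideanSpace ℝ (Fin n)) (t : ℝ) :
    HasDerivAt (fun s : ℝ => p + s • w) w t := by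
  simpa using ((hasDerivAt_id t).smul_const w).const_add p

private lemma micro_d1 (hsmooth : ContDiffOn ℝ (⊤ : ℕ∞) a {ξ : EuclideanSpace ℝ (Fin n) | ξ ≠ 0})
    (p w : EuclideanSpace ℝ (Fin n)) {t : ℝ} (h : p + t • w ≠ 0) :
    HasDerivAt (fun s : ℝ => a (p + s • w)) (fderiv ℝ a (p + t • w) w) t :=
  ((micro_da hsmooth h).hasFDerivAt).comp_hasDerivAt t (micro_curve p w t)

private lemma micro_d2 (hsmooth : ContDiffOn ℝ (⊤ : ℕ∞) a {ξ : EuclideanSpace ℝ (Fin n) | ξ ≠ 0})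
    (p w v : EuclideanSpace ℝ (Fin n)) {t : ℝ} (h : p + t • w ≠ 0) :
    HasDerivAt (fun s : ℝ => fderiv ℝ a (p + s • w) v)
      (fderiv ℝ (fderiv ℝ a) (p + t • w) w v) t := by
  have h1 : HasFDerivAt (fderiv ℝ a) (fderiv ℝ (fderiv ℝ a) (p + t • w)) (p + t • w) :=
    (micro_dfa hsmooth h).hasFDerivAt
  have h2 := ((ContinuousLinearMap.apply ℝ ℝ v).hasFDerivAt.comp (p + t • w) h1)
  have h3 := h2.comp_hasDerivAt t (micro_curve p w t)
  simpa [Function.comp_def] using h3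

private lemma micro_euler (hsmooth : ContDiffOn ℝ (⊤ : ℕ∞) a {ξ : EuclideanSpace ℝ (Fin n) | ξ ≠ 0})
    (hhom : ∀ (c : ℝ), 0 < c → ∀ ξ : EuclideanSpace ℝ (Fin n), ξ ≠ 0 → a (c • ξ) = c * a ξ)
    {x : EuclideanSpace ℝ (Fin n)} (hx : x ≠ 0) : fderiv ℝ a x x = a x := by
  have h1 := micro_d1 hsmooth 0 x (t := 1) (by simpa using hx)
  simp only [zero_add, one_smul] at h1
  have heq : (fun t : ℝ => t * a x) =ᶠ[nhds 1] fun t : ℝ => a (t • x) := by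
    filter_upwards [isOpen_Ioi.mem_nhds zero_lt_one] with t ht
    exact (hhom t ht x hx).symm
  have h2 : HasDerivAt (fun t : ℝ => t * a x) (fderiv ℝ a x x) 1 :=
    h1.congr_of_eventuallyEq heq
  have h3 : HasDerivAt (fun t : ℝ => t * a x) (a x) 1 := by
    simpa using (hasDerivAt_id (1 : ℝ)).mul_const (a x)
  exact h2.unique h3

private lemma micro_smulmap (c : ℝ) (x : EuclideanSpace ℝ (Fin n)) :
    HasFDerivAt (fun y : EuclideanSpace ℝ (Fin n) => c • y)
      (c • ContinuousLinearMap.id ℝ (EuclideanSpace ℝ (Fin n))) x := by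
  have := (c • ContinuousLinearMap.id ℝ (EuclideanSpace ℝ (Fin n))).hasFDerivAt (x := x)
  exact (hasFDerivAt_id x).const_smul c

private lemma micro_fderiv_homog
    (hsmooth : ContDiffOn ℝ (⊤ : ℕ∞) a {ξ : EuclideanSpace ℝ (Fin n) | ξ ≠ 0})
    (hhom : ∀ (c : ℝ), 0 < c → ∀ ξ : EuclideanSpace ℝ (Fin n), ξ ≠ 0 → a (c • ξ) = c * a ξ)
    {c : ℝ} (hc : 0 < c) {x : EuclideanSpace ℝ (Fin n)} (hx : x ≠ 0)
    (v : EuclideanSpace ℝ (Fin n)) : fderiv ℝ a (c • x) v = fderiv ℝ a x v := by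
  have hcx : c • x ≠ 0 := smul_ne_zero (ne_of_gt hc) hx
  have h1 : HasFDerivAt (fun y => a (c • y))
      ((fderiv ℝ a (c • x)).comp (c • ContinuousLinearMap.id ℝ (EuclideanSpace ℝ (Fin n)))) x :=
    ((micro_da hsmooth hcx).hasFDerivAt).comp x (micro_smulmap c x)
  have h2 : HasFDerivAt (fun y => c * a y) (c • fderiv ℝ a x) x :=
    ((micro_da hsmooth hx).hasFDerivAt).const_mul c
  have heq : (fun y => c * a y) =ᶠ[nhds x] fun y => a (c • y) := by
    filter_upwards [isOpen_ne.mem_nhds hx] with y hy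
    exact (hhom c hc y hy).symm
  have h4 := (h1.congr_of_eventuallyEq heq).unique h2
  have h5 := congrArg (fun L : EuclideanSpace ℝ (Fin n) →L[ℝ] ℝ => L v) h4
  simp only [ContinuousLinearMap.comp_apply, ContinuousLinearMap.smul_apply,
    ContinuousLinearMap.id_apply, map_smul, smul_eq_mul] at h5
  exact mul_left_cancel₀ (ne_of_gt hc) h5

private lemma micro_hessian_homog
    (hsmooth : ContDiffOn ℝ (⊤ : ℕ∞) a {ξ : EuclideanSpace ℝ (Fin n) | ξ ≠ 0})
    (hhom : ∀ (c : ℝ), 0 < c → ∀ ξ : EuclideanSpace ℝ (Fin n), ξ ≠ 0 → a (c • ξ) = c * a ξ)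
    {c : ℝ} (hc : 0 < c) {x : EuclideanSpace ℝ (Fin n)} (hx : x ≠ 0)
    (v w : EuclideanSpace ℝ (Fin n)) :
    fderiv ℝ (fderiv ℝ a) (c • x) v w = c⁻¹ * fderiv ℝ (fderiv ℝ a) x v w := by
  have hcx : c • x ≠ 0 := smul_ne_zero (ne_of_gt hc) hx
  have h1 : HasFDerivAt (fun y => fderiv ℝ a (c • y))
      ((fderiv ℝ (fderiv ℝ a) (c • x)).comp
        (c • ContinuousLinearMap.id ℝ (EuclideanSpace ℝ (Fin n)))) x :=
    ((micro_dfa hsmooth hcx).hasFDerivAt).comp x (micro_smulmap c x)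
  have heq : fderiv ℝ a =ᶠ[nhds x] fun y => fderiv ℝ a (c • y) := by
    filter_upwards [isOpen_ne.mem_nhds hx] with y hy
    exact ContinuousLinearMap.ext fun v' => (micro_fderiv_homog hsmooth hhom hc hy v').symm
  have h4 := (h1.congr_of_eventuallyEq heq).unique ((micro_dfa hsmooth hx).hasFDerivAt)
  have h5 := congrArg (fun L => (L v) w) h4
  simp only [ContinuousLinearMap.comp_apply, ContinuousLinearMap.smul_apply,
    ContinuousLinearMap.id_apply, map_smul, ContinuousLinearMap.coe_smul',
    Pi.smul_apply, smul_eq_mul] at h5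
  field_simp
  linarith [h5]

private lemma micro_hessian_radial
    (hsmooth : ContDiffOn ℝ (⊤ : ℕ∞) a {ξ : EuclideanSpace ℝ (Fin n) | ξ ≠ 0})
    (hhom : ∀ (c : ℝ), 0 < c → ∀ ξ : EuclideanSpace ℝ (Fin n), ξ ≠ 0 → a (c • ξ) = c * a ξ)
    {x : EuclideanSpace ℝ (Fin n)} (hx : x ≠ 0) (v : EuclideanSpace ℝ (Fin n)) :
    fderiv ℝ (fderiv ℝ a) x x v = 0 := by
  have h1 := micro_d2 hsmooth 0 x v (t := 1) (by simpa using hx)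
  simp only [zero_add, one_smul] at h1
  have heq : (fun _ : ℝ => fderiv ℝ a x v) =ᶠ[nhds 1] fun c : ℝ => fderiv ℝ a (c • x) v := by
    filter_upwards [isOpen_Ioi.mem_nhds zero_lt_one] with c hc
    exact (micro_fderiv_homog hsmooth hhom hc hx v).symm
  have h2 : HasDerivAt (fun _ : ℝ => fderiv ℝ a x v) (fderiv ℝ (fderiv ℝ a) x x v) 1 :=
    h1.congr_of_eventuallyEq heq
  exact h2.unique (hasDerivAt_const 1 _)

private lemma micro_hessian_symm
    (hsmooth : ContDiffOn ℝ (⊤ : ℕ∞) a {ξ : EuclideanSpace ℝ (Fin n) | ξ ≠ 0})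
    {x : EuclideanSpace ℝ (Fin n)} (hx : x ≠ 0) (v w : EuclideanSpace ℝ (Fin n)) :
    fderiv ℝ (fderiv ℝ a) x v w = fderiv ℝ (fderiv ℝ a) x w v :=
  (micro_cda hsmooth hx).isSymmSndFDerivAt (by rw [minSmoothness_of_isRCLikeNormedField]; exact (WithTop.coe_le_coe.2 (le_top : (2:ℕ∞) ≤ ⊤))) v w


private lemma micro_coerc {c₀ : ℝ}
    (hsmooth : ContDiffOn ℝ (⊤ : ℕ∞) a {ξ : EuclideanSpace ℝ (Fin n) | ξ ≠ 0})
    (hhom : ∀ (c : ℝ), 0 < c → ∀ ξ : EuclideanSpace ℝ (Fin n), ξ ≠ 0 → a (c • ξ) = c * a ξ)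
    (hconv : ∀ ω : EuclideanSpace ℝ (Fin n), ‖ω‖ = 1 →
      ∀ v : EuclideanSpace ℝ (Fin n), ⟪v, ω⟫ = 0 →
        c₀ * ‖v‖ ^ 2 ≤ iteratedFDeriv ℝ 2 a ω ![v, v])
    {z : EuclideanSpace ℝ (Fin n)} (hz : ‖z‖ = 1) (v : EuclideanSpace ℝ (Fin n)) :
    c₀ * (‖v‖ ^ 2 - ⟪v, z⟫ ^ 2) ≤ fderiv ℝ (fderiv ℝ a) z v v := by
  have hz0 : z ≠ 0 := by intro h; rw [h] at hz; simp at hz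
  set α : ℝ := ⟪v, z⟫ with hα
  set v' : EuclideanSpace ℝ (Fin n) := v - α • z with hv'
  have hperp : ⟪v', z⟫ = 0 := by
    rw [hv', inner_sub_left, real_inner_smul_left, real_inner_self_eq_norm_sq, hz]
    ring
  have hnv' : ‖v'‖ ^ 2 = ‖v‖ ^ 2 - α ^ 2 := by
    rw [hv', @norm_sub_sq_real, real_inner_smul_right, norm_smul, hz]
    simp [← hα, mul_pow, sq_abs]
    ring
  have h := hconv z hz v' hperp
  rw [iteratedFDeriv_two_apply] at h
  simp only [Matrix.cons_val_zero, Matrix.cons_val_one, Matrix.head_cons] at h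
  have hrad : ∀ u, fderiv ℝ (fderiv ℝ a) z z u = 0 := micro_hessian_radial hsmooth hhom hz0
  have hrad2 : fderiv ℝ (fderiv ℝ a) z v' z = 0 := by
    rw [micro_hessian_symm hsmooth hz0 v' z]; exact hrad v'
  have hexp : fderiv ℝ (fderiv ℝ a) z v v = fderiv ℝ (fderiv ℝ a) z v' v' := by
    have hv : v = v' + α • z := by rw [hv']; abel
    conv_lhs => rw [hv]
    rw [map_add, map_smul]
    simp [ContinuousLinearMap.add_apply, ContinuousLinearMap.smul_apply, map_add, map_smul,
      hrad, hrad2, smul_eq_mul]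
  rw [hexp, ← hnv']
  exact h

private lemma micro_psd {c₀ : ℝ} (hc₀ : 0 < c₀)
    (hsmooth : ContDiffOn ℝ (⊤ : ℕ∞) a {ξ : EuclideanSpace ℝ (Fin n) | ξ ≠ 0})
    (hhom : ∀ (c : ℝ), 0 < c → ∀ ξ : EuclideanSpace ℝ (Fin n), ξ ≠ 0 → a (c • ξ) = c * a ξ)
    (hconv : ∀ ω : EuclideanSpace ℝ (Fin n), ‖ω‖ = 1 →
      ∀ v : EuclideanSpace ℝ (Fin n), ⟪v, ω⟫ = 0 →
        c₀ * ‖v‖ ^ 2 ≤ iteratedFDeriv ℝ 2 a ω ![v, v])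
    {z : EuclideanSpace ℝ (Fin n)} (hz : z ≠ 0) (v : EuclideanSpace ℝ (Fin n)) :
    0 ≤ fderiv ℝ (fderiv ℝ a) z v v := by
  have hr : (0:ℝ) < ‖z‖ := norm_pos_iff.2 hz
  set zh : EuclideanSpace ℝ (Fin n) := ‖z‖⁻¹ • z with hzh
  have hzh1 : ‖zh‖ = 1 := norm_smul_inv_norm hz
  have hzh0 : zh ≠ 0 := by intro h; rw [h] at hzh1; simp at hzh1
  have hid : z = ‖z‖ • zh := by rw [hzh, smul_smul, mul_inv_cancel₀ (ne_of_gt hr), one_smul]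
  have h1 : fderiv ℝ (fderiv ℝ a) z v v = ‖z‖⁻¹ * fderiv ℝ (fderiv ℝ a) zh v v := by
    conv_lhs => rw [hid]
    exact micro_hessian_homog hsmooth hhom hr hzh0 v v
  rw [h1]
  have h2 := micro_coerc hsmooth hhom hconv hzh1 v
  have h3 : (0:ℝ) ≤ ‖v‖ ^ 2 - ⟪v, zh⟫ ^ 2 := by
    have := abs_real_inner_le_norm v zh
    rw [hzh1, mul_one] at this
    nlinarith [abs_nonneg (⟪v, zh⟫ : ℝ), sq_abs (⟪v, zh⟫ : ℝ)]
  have h4 : (0:ℝ) ≤ fderiv ℝ (fderiv ℝ a) zh v v := le_trans (by positivity) h2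
  positivity

private lemma micro_Mbound (hn : 2 ≤ n)
    (hsmooth : ContDiffOn ℝ (⊤ : ℕ∞) a {ξ : EuclideanSpace ℝ (Fin n) | ξ ≠ 0}) :
    ∃ M > 0, ∀ z : EuclideanSpace ℝ (Fin n), ‖z‖ = 1 → ‖fderiv ℝ (fderiv ℝ a) z‖ ≤ M := by
  have hopen : IsOpen {ξ : EuclideanSpace ℝ (Fin n) | ξ ≠ 0} := isOpen_ne
  have hB2 : ContDiffOn ℝ (⊤ : ℕ∞) (fderiv ℝ a) {ξ : EuclideanSpace ℝ (Fin n) | ξ ≠ 0} :=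
    hsmooth.fderiv_of_isOpen hopen (by norm_cast)
  have hcont : ContinuousOn (fderiv ℝ (fderiv ℝ a)) {ξ : EuclideanSpace ℝ (Fin n) | ξ ≠ 0} :=
    hB2.continuousOn_fderiv_of_isOpen hopen (by norm_cast)
  have hsub : Metric.sphere (0 : EuclideanSpace ℝ (Fin n)) 1 ⊆
      {ξ : EuclideanSpace ℝ (Fin n) | ξ ≠ 0} := by
    intro z hzs
    have : ‖z‖ = 1 := by simpa using hzs
    intro h; rw [h] at this; simp at this
  have hK : IsCompact (Metric.sphere (0 : EuclideanSpace ℝ (Fin n)) 1) := isCompact_sphere 0 1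
  have hne : (Metric.sphere (0 : EuclideanSpace ℝ (Fin n)) 1).Nonempty := by
    refine ⟨EuclideanSpace.single ⟨0, by omega⟩ (1:ℝ), ?_⟩
    simp [EuclideanSpace.norm_single]
  obtain ⟨z₀, hz₀, hmax⟩ := hK.exists_isMaxOn hne
    ((continuous_norm (E := EuclideanSpace ℝ (Fin n) →L[ℝ] EuclideanSpace ℝ (Fin n) →L[ℝ] ℝ)).comp_continuousOn (hcont.mono hsub))
  refine ⟨‖fderiv ℝ (fderiv ℝ a) z₀‖ + 1, by positivity, fun z hz => ?_⟩
  have hzs : z ∈ Metric.sphere (0 : EuclideanSpace ℝ (Fin n)) 1 := by simpa using hz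
  have h2 : ‖fderiv ℝ (fderiv ℝ a) z‖ ≤ ‖fderiv ℝ (fderiv ℝ a) z₀‖ := hmax hzs
  linarith

set_option maxHeartbeats 2000000 in
private lemma micro_near {c₀ : ℝ} (hc₀ : 0 < c₀)
    (hsmooth : ContDiffOn ℝ (⊤ : ℕ∞) a {ξ : EuclideanSpace ℝ (Fin n) | ξ ≠ 0})
    (hhom : ∀ (c : ℝ), 0 < c → ∀ ξ : EuclideanSpace ℝ (Fin n), ξ ≠ 0 → a (c • ξ) = c * a ξ)
    (hconv : ∀ ω : EuclideanSpace ℝ (Fin n), ‖ω‖ = 1 →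
      ∀ v : EuclideanSpace ℝ (Fin n), ⟪v, ω⟫ = 0 →
        c₀ * ‖v‖ ^ 2 ≤ iteratedFDeriv ℝ 2 a ω ![v, v])
    {M : ℝ} (hMpos : 0 < M)
    (hM : ∀ z : EuclideanSpace ℝ (Fin n), ‖z‖ = 1 → ‖fderiv ℝ (fderiv ℝ a) z‖ ≤ M)
    {ω u : EuclideanSpace ℝ (Fin n)} (hω : ‖ω‖ = 1) (hu : ‖u‖ = 1)
    (hclose : ‖u - ω‖ ≤ 1/4) :
    c₀/4 * ‖u - ω‖ ^ 2 ≤ a u - fderiv ℝ a ω u ∧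
      a u - fderiv ℝ a ω u ≤ M * ‖u - ω‖ ^ 2 := by
  set w : EuclideanSpace ℝ (Fin n) := u - ω with hw
  set s : ℝ := ‖w‖ ^ 2 with hs
  have hs0 : 0 ≤ s := by positivity
  have hs16 : s ≤ 1/16 := by
    rw [hs]; nlinarith [norm_nonneg w]
  have hinner : ⟪ω, w⟫ = -s/2 := by
    have h1 : ‖u - ω‖ ^ 2 = 2 - 2 * ⟪u, ω⟫ := by
      rw [@norm_sub_sq_real, hu, hω]; ring
    have h2 : (⟪ω, w⟫ : ℝ) = ⟪ω, u⟫ - 1 := by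
      rw [hw, inner_sub_right, real_inner_self_eq_norm_sq, hω]; ring
    rw [h2, real_inner_comm]
    rw [hs, hw]
    linarith
  have hnorm : ∀ t : ℝ, ‖ω + t • w‖ ^ 2 = 1 - (t - t^2) * s := by
    intro t
    have h1 : ‖ω + t • w‖ ^ 2 = ‖ω‖ ^ 2 + 2 * ⟪ω, t • w⟫ + ‖t • w‖ ^ 2 :=
      norm_add_sq_real ω (t • w)
    rw [h1, real_inner_smul_right, hinner, hω, norm_smul, mul_pow]
    simp only [Real.norm_eq_abs, sq_abs]
    rw [← hs]
    ring
  have hseg : ∀ t : ℝ, ω + t • w ≠ 0 := by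
    intro t h
    have h1 := hnorm t
    rw [h] at h1
    simp only [norm_zero] at h1
    nlinarith [sq_nonneg (2*t - 1)]
  -- derivative setup
  set f : ℝ → ℝ := fun t => a (ω + t • w) - fderiv ℝ a ω (ω + t • w) with hf
  set f' : ℝ → ℝ := fun t => fderiv ℝ a (ω + t • w) w - fderiv ℝ a ω w with hf'
  set f'' : ℝ → ℝ := fun t => fderiv ℝ (fderiv ℝ a) (ω + t • w) w w with hf''
  have hω0 : ω ≠ 0 := by intro h; rw [h] at hω; simp at hω
  have hfd : ∀ t, HasDerivAt f (f' t) t := by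
    intro t
    exact (micro_d1 hsmooth ω w (hseg t)).sub
      (((fderiv ℝ a ω).hasFDerivAt).comp_hasDerivAt t (micro_curve ω w t))
  have hfd' : ∀ t, HasDerivAt f' (f'' t) t := by
    intro t
    exact (micro_d2 hsmooth ω w w (hseg t)).sub_const (fderiv ℝ a ω w)
  have hf0 : f 0 = 0 := by
    simp only [hf, zero_smul, add_zero]
    rw [micro_euler hsmooth hhom hω0, sub_self]
  have hf0' : f' 0 = 0 := by
    simp only [hf', zero_smul, add_zero, sub_self]
  have hu1 : ω + (1:ℝ) • w = u := by rw [one_smul, hw]; abel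
  have hf1 : f 1 = a u - fderiv ℝ a ω u := by rw [hf]; simp only [hu1]
  -- bounds on f'' over [0,1]
  have hbounds : ∀ t ∈ Set.Icc (0:ℝ) 1, c₀/2 * s ≤ f'' t ∧ f'' t ≤ 2 * M * s := by
    intro t ht
    obtain ⟨ht0, ht1⟩ := ht
    set ζ : EuclideanSpace ℝ (Fin n) := ω + t • w with hζ
    have hζ0 : ζ ≠ 0 := hseg t
    have hζn : ‖ζ‖ ^ 2 = 1 - (t - t^2) * s := hnorm t
    have htt : 0 ≤ t - t^2 := by nlinarith
    have htt4 : t - t^2 ≤ 1/4 := by nlinarith [sq_nonneg (2*t - 1)]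
    have hζle : ‖ζ‖ ≤ 1 := by nlinarith [norm_nonneg ζ]
    have hζge : (3:ℝ)/4 ≤ ‖ζ‖ := by nlinarith [norm_nonneg ζ]
    have hζpos : (0:ℝ) < ‖ζ‖ := by linarith
    set ζh : EuclideanSpace ℝ (Fin n) := ‖ζ‖⁻¹ • ζ with hζh
    have hζh1 : ‖ζh‖ = 1 := norm_smul_inv_norm hζ0
    have hζh0 : ζh ≠ 0 := by intro h; rw [h] at hζh1; simp at hζh1
    have hid : ζ = ‖ζ‖ • ζh := by
      rw [hζh, smul_smul, mul_inv_cancel₀ (ne_of_gt hζpos), one_smul]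
    have hBval : fderiv ℝ (fderiv ℝ a) ζ w w = ‖ζ‖⁻¹ * fderiv ℝ (fderiv ℝ a) ζh w w := by
      conv_lhs => rw [hid]
      exact micro_hessian_homog hsmooth hhom hζpos hζh0 w w
    -- inner product of w with ζh
    have hwζ : (⟪w, ζ⟫ : ℝ) = (t - 1/2) * s := by
      rw [hζ, inner_add_right, real_inner_smul_right, real_inner_comm ω w, hinner,
        real_inner_self_eq_norm_sq, ← hs]
      ring
    have hwζh : (⟪w, ζh⟫ : ℝ) = ‖ζ‖⁻¹ * ((t - 1/2) * s) := by
      rw [hζh, real_inner_smul_right, hwζ]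
    have hαsq : (⟪w, ζh⟫ : ℝ) ^ 2 ≤ s/36 := by
      rw [hwζh]
      have hinv : ‖ζ‖⁻¹ ≤ 4/3 := by
        rw [inv_le_comm₀ hζpos (by norm_num)]
        linarith
      have hinvpos : (0:ℝ) < ‖ζ‖⁻¹ := by positivity
      have h1 : (t - 1/2)^2 ≤ 1/4 := by nlinarith
      have h2 : (‖ζ‖⁻¹)^2 ≤ 16/9 := by nlinarith
      have h3 : s^2 ≤ s/16 := by nlinarith
      have h4 : (‖ζ‖⁻¹)^2 * (t - 1/2)^2 ≤ 4/9 := by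
        nlinarith [sq_nonneg (‖ζ‖⁻¹), sq_nonneg (t - 1/2)]
      have h5 : (‖ζ‖⁻¹)^2 * (t - 1/2)^2 * s^2 ≤ (4/9) * (s/16) := by
        nlinarith [sq_nonneg s, mul_nonneg (sq_nonneg (‖ζ‖⁻¹)) (sq_nonneg (t - 1/2))]
      calc (‖ζ‖⁻¹ * ((t - 1/2) * s))^2 = (‖ζ‖⁻¹)^2 * (t - 1/2)^2 * s^2 := by ring
        _ ≤ (4/9) * (s/16) := h5
        _ ≤ s/36 := by linarith
    have hM' : ‖fderiv ℝ (fderiv ℝ a) ζh‖ ≤ M := hM ζh hζh1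
    constructor
    · -- lower
      have hc := micro_coerc hsmooth hhom hconv hζh1 w
      have hlow : c₀ * (35/36 * s) ≤ fderiv ℝ (fderiv ℝ a) ζh w w := by
        have : c₀ * (35/36 * s) ≤ c₀ * (‖w‖^2 - ⟪w, ζh⟫^2) := by
          apply mul_le_mul_of_nonneg_left _ (le_of_lt hc₀)
          rw [← hs]
          linarith
        linarith
      have hinv1 : (1:ℝ) ≤ ‖ζ‖⁻¹ := by
        rw [le_inv_comm₀ (by norm_num) hζpos]
        simpa using hζle
      have hnn : (0:ℝ) ≤ fderiv ℝ (fderiv ℝ a) ζh w w := by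
        have h3 : (0:ℝ) ≤ ‖w‖^2 - ⟪w, ζh⟫^2 := by rw [← hs]; linarith
        nlinarith
      calc c₀/2 * s ≤ c₀ * (35/36 * s) := by nlinarith
        _ ≤ fderiv ℝ (fderiv ℝ a) ζh w w := hlow
        _ ≤ ‖ζ‖⁻¹ * fderiv ℝ (fderiv ℝ a) ζh w w := le_mul_of_one_le_left hnn hinv1
        _ = f'' t := by rw [hf'', ← hBval]
    · -- upper
      have hub : fderiv ℝ (fderiv ℝ a) ζh w w ≤ M * s := by
        have h1 : |fderiv ℝ (fderiv ℝ a) ζh w w| ≤ ‖fderiv ℝ (fderiv ℝ a) ζh‖ * ‖w‖ * ‖w‖ := by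
          have := (fderiv ℝ (fderiv ℝ a) ζh).le_opNorm₂ w w
          simpa [Real.norm_eq_abs] using this
        have h2 : ‖fderiv ℝ (fderiv ℝ a) ζh‖ * ‖w‖ * ‖w‖ ≤ M * s := by
          rw [hs]
          nlinarith [norm_nonneg w, norm_nonneg (fderiv ℝ (fderiv ℝ a) ζh)]
        calc fderiv ℝ (fderiv ℝ a) ζh w w ≤ |fderiv ℝ (fderiv ℝ a) ζh w w| := le_abs_self _
          _ ≤ M * s := le_trans h1 h2
      have hinv : ‖ζ‖⁻¹ ≤ 4/3 := by
        rw [inv_le_comm₀ hζpos (by norm_num)]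
        linarith
      have hinvpos : (0:ℝ) < ‖ζ‖⁻¹ := by positivity
      have hnn : (0:ℝ) ≤ fderiv ℝ (fderiv ℝ a) ζh w w := by
        have hc := micro_coerc hsmooth hhom hconv hζh1 w
        have h3 : (0:ℝ) ≤ ‖w‖^2 - ⟪w, ζh⟫^2 := by rw [← hs]; linarith
        nlinarith
      have : f'' t = ‖ζ‖⁻¹ * fderiv ℝ (fderiv ℝ a) ζh w w := by rw [hf'', ← hBval]
      rw [this]
      calc ‖ζ‖⁻¹ * fderiv ℝ (fderiv ℝ a) ζh w w ≤ (4/3) * (M * s) := by nlinarith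
        _ ≤ 2 * M * s := by nlinarith
  have hquad := micro_quad hfd hfd' hf0 hf0'
    (fun t ht => (hbounds t ht).1) (fun t ht => (hbounds t ht).2)
  rw [hf1] at hquad
  constructor
  · calc c₀/4 * ‖w‖^2 = (c₀/2 * s)/2 := by rw [← hs]; ring
      _ ≤ a u - fderiv ℝ a ω u := hquad.1
  · calc a u - fderiv ℝ a ω u ≤ (2*M*s)/2 := hquad.2
      _ = M * ‖w‖^2 := by rw [← hs]; ring

set_option maxHeartbeats 2000000 in
private lemma micro_pos {c₀ : ℝ} (hc₀ : 0 < c₀)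
    (hsmooth : ContDiffOn ℝ (⊤ : ℕ∞) a {ξ : EuclideanSpace ℝ (Fin n) | ξ ≠ 0})
    (hhom : ∀ (c : ℝ), 0 < c → ∀ ξ : EuclideanSpace ℝ (Fin n), ξ ≠ 0 → a (c • ξ) = c * a ξ)
    (hpos : ∀ ξ : EuclideanSpace ℝ (Fin n), ξ ≠ 0 → 0 < a ξ)
    (hconv : ∀ ω : EuclideanSpace ℝ (Fin n), ‖ω‖ = 1 →
      ∀ v : EuclideanSpace ℝ (Fin n), ⟪v, ω⟫ = 0 →
        c₀ * ‖v‖ ^ 2 ≤ iteratedFDeriv ℝ 2 a ω ![v, v])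
    {M : ℝ} (hMpos : 0 < M)
    (hM : ∀ z : EuclideanSpace ℝ (Fin n), ‖z‖ = 1 → ‖fderiv ℝ (fderiv ℝ a) z‖ ≤ M)
    {ω u : EuclideanSpace ℝ (Fin n)} (hω : ‖ω‖ = 1) (hu : ‖u‖ = 1) (hne : u ≠ ω) :
    0 < a u - fderiv ℝ a ω u := by
  have hω0 : ω ≠ 0 := by intro h; rw [h] at hω; simp at hω
  by_cases hmin : u = -ω
  · rw [hmin]
    have h1 : fderiv ℝ a ω (-ω) = -(a ω) := by
      rw [map_neg, micro_euler hsmooth hhom hω0]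
    rw [h1]
    have h2 : 0 < a (-ω) := hpos _ (by simpa using hω0)
    have h3 : 0 < a ω := hpos _ hω0
    linarith
  · set w : EuclideanSpace ℝ (Fin n) := u - ω with hw
    set s : ℝ := ‖w‖ ^ 2 with hs
    have hs0 : 0 ≤ s := by positivity
    have hinner : ⟪ω, w⟫ = -s/2 := by
      have h1 : ‖u - ω‖ ^ 2 = 2 - 2 * ⟪u, ω⟫ := by
        rw [@norm_sub_sq_real, hu, hω]; ring
      have h2 : (⟪ω, w⟫ : ℝ) = ⟪ω, u⟫ - 1 := by
        rw [hw, inner_sub_right, real_inner_self_eq_norm_sq, hω]; ring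
      rw [h2, real_inner_comm]
      rw [hs, hw]
      linarith
    have hs4 : s < 4 := by
      have hne0 : u + ω ≠ 0 := fun h => hmin (add_eq_zero_iff_eq_neg.1 h)
      have h1 : 0 < ‖u + ω‖ ^ 2 := pow_pos (norm_pos_iff.2 hne0) 2
      have h2 : ‖u + ω‖ ^ 2 = 2 + 2 * ⟪u, ω⟫ := by
        rw [@norm_add_sq_real, hu, hω]; ring
      have h3 : ‖u - ω‖ ^ 2 = 2 - 2 * ⟪u, ω⟫ := by
        rw [@norm_sub_sq_real, hu, hω]; ring
      rw [hs, hw]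
      linarith
    have hnorm : ∀ t : ℝ, ‖ω + t • w‖ ^ 2 = 1 - (t - t^2) * s := by
      intro t
      have h1 : ‖ω + t • w‖ ^ 2 = ‖ω‖ ^ 2 + 2 * ⟪ω, t • w⟫ + ‖t • w‖ ^ 2 :=
        norm_add_sq_real ω (t • w)
      rw [h1, real_inner_smul_right, hinner, hω, norm_smul, mul_pow]
      simp only [Real.norm_eq_abs, sq_abs]
      rw [← hs]
      ring
    have hseg : ∀ t : ℝ, ω + t • w ≠ 0 := by
      intro t h
      have h1 := hnorm t
      rw [h] at h1
      simp only [norm_zero] at h1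
      nlinarith [sq_nonneg (2*t - 1)]
    set f : ℝ → ℝ := fun t => a (ω + t • w) - fderiv ℝ a ω (ω + t • w) with hf
    set f' : ℝ → ℝ := fun t => fderiv ℝ a (ω + t • w) w - fderiv ℝ a ω w with hf'
    set f'' : ℝ → ℝ := fun t => fderiv ℝ (fderiv ℝ a) (ω + t • w) w w with hf''
    have hfd : ∀ t, HasDerivAt f (f' t) t := by
      intro t
      exact (micro_d1 hsmooth ω w (hseg t)).sub
        (((fderiv ℝ a ω).hasFDerivAt).comp_hasDerivAt t (micro_curve ω w t))
    have hfd' : ∀ t, HasDerivAt f' (f'' t) t := by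
      intro t
      exact (micro_d2 hsmooth ω w w (hseg t)).sub_const (fderiv ℝ a ω w)
    have hf0 : f 0 = 0 := by
      simp only [hf, zero_smul, add_zero]
      rw [micro_euler hsmooth hhom hω0, sub_self]
    have hf0' : f' 0 = 0 := by
      simp only [hf', zero_smul, add_zero, sub_self]
    have hu1 : ω + (1:ℝ) • w = u := by rw [one_smul, hw]; abel
    have hmono' : MonotoneOn f' (Set.Icc (0:ℝ) 1) :=
      micro_monoOn hfd' (fun t _ => micro_psd hc₀ hsmooth hhom hconv (hseg t) w)
    have hf'nn : ∀ t ∈ Set.Ioo (0:ℝ) 1, 0 ≤ f' t := by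
      intro t ht
      have := hmono' (Set.mem_Icc.2 ⟨le_refl 0, zero_le_one⟩)
        (Set.mem_Icc.2 ⟨le_of_lt ht.1, le_of_lt ht.2⟩) (le_of_lt ht.1)
      rw [hf0'] at this
      exact this
    have hmono : MonotoneOn f (Set.Icc (0:ℝ) 1) := micro_monoOn hfd hf'nn
    -- evaluate at t = 1/16
    set ζ : EuclideanSpace ℝ (Fin n) := ω + (1/16 : ℝ) • w with hζdef
    have hζ0 : ζ ≠ 0 := hseg (1/16)
    have hζpos : (0:ℝ) < ‖ζ‖ := norm_pos_iff.2 hζ0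
    set ζh : EuclideanSpace ℝ (Fin n) := ‖ζ‖⁻¹ • ζ with hζhdef
    have hζh1 : ‖ζh‖ = 1 := norm_smul_inv_norm hζ0
    have hζh0 : ζh ≠ 0 := by intro h; rw [h] at hζh1; simp at hζh1
    have hid : ζ = ‖ζ‖ • ζh := by
      rw [hζhdef, smul_smul, mul_inv_cancel₀ (ne_of_gt hζpos), one_smul]
    have hw2 : ‖w‖ ≤ 2 := by
      rw [hw]
      calc ‖u - ω‖ ≤ ‖u‖ + ‖ω‖ := norm_sub_le u ω
        _ = 2 := by rw [hu, hω]; norm_num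
    have hd1 : ‖ζ - ω‖ ≤ 1/8 := by
      have h1 : ζ - ω = (1/16 : ℝ) • w := by rw [hζdef]; abel
      rw [h1, norm_smul]
      simp only [Real.norm_eq_abs]
      rw [abs_of_pos (by norm_num : (0:ℝ) < 1/16)]
      linarith
    have hrb : |‖ζ‖ - 1| ≤ 1/8 := by
      have := abs_norm_sub_norm_le ζ ω
      rw [hω] at this
      linarith [hd1]
    have hd2 : ‖ζh - ζ‖ ≤ 1/8 := by
      have h1 : ζh - ζ = (‖ζ‖⁻¹ - 1) • ζ := by
        rw [hζhdef, sub_smul, one_smul]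
      rw [h1, norm_smul]
      simp only [Real.norm_eq_abs]
      have h2 : |‖ζ‖⁻¹ - 1| * ‖ζ‖ = |(‖ζ‖⁻¹ - 1) * ‖ζ‖| := by
        rw [abs_mul, abs_of_nonneg (norm_nonneg ζ)]
      have h3 : (‖ζ‖⁻¹ - 1) * ‖ζ‖ = 1 - ‖ζ‖ := by
        field_simp
      rw [h2, h3, abs_sub_comm]
      exact hrb
    have hclose : ‖ζh - ω‖ ≤ 1/4 := by
      have := dist_triangle ζh ζ ω
      simp only [dist_eq_norm] at this
      linarith
    have hζhne : ζh ≠ ω := by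
      intro heq
      have hζω : ζ = ‖ζ‖ • ω := by
        conv_lhs => rw [hid]
        rw [heq]
      have hu2 : u = (16 * ‖ζ‖ - 15) • ω := by
        have h1 : u = (16:ℝ) • ζ - (15:ℝ) • ω := by
          rw [hζdef, hw]; module
        rw [h1]
        nth_rewrite 1 [hζω]
        module
      have h3 : |16 * ‖ζ‖ - 15| = 1 := by
        have := congrArg norm hu2
        rw [hu, norm_smul] at this
        simp only [Real.norm_eq_abs, hω, mul_one] at this
        exact this.symm
      rcases abs_eq (by norm_num : (0:ℝ) ≤ 1) |>.1 h3 with h4 | h4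
      · apply hne
        rw [hu2, h4, one_smul]
      · apply hmin
        rw [hu2, h4, neg_smul, one_smul]
    have hdist0 : 0 < ‖ζh - ω‖ := by
      rw [norm_pos_iff, sub_ne_zero]
      exact hζhne
    have hnear := (micro_near hc₀ hsmooth hhom hconv hMpos hM hω hζh1 hclose).1
    have hFpos : 0 < a ζh - fderiv ℝ a ω ζh := by
      have : 0 < c₀/4 * ‖ζh - ω‖ ^ 2 := by positivity
      linarith
    have hval : f (1/16) = ‖ζ‖ * (a ζh - fderiv ℝ a ω ζh) := by
      have h1 : a ζ = ‖ζ‖ * a ζh := by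
        conv_lhs => rw [hid]
        exact hhom ‖ζ‖ hζpos ζh hζh0
      have h2 : fderiv ℝ a ω ζ = ‖ζ‖ * fderiv ℝ a ω ζh := by
        conv_lhs => rw [hid]
        rw [map_smul, smul_eq_mul]
      simp only [hf]
      rw [← hζdef, h1, h2]
      ring
    have hstep : f (1/16) ≤ f 1 := by
      apply hmono (Set.mem_Icc.2 ⟨by norm_num, by norm_num⟩)
        (Set.mem_Icc.2 ⟨zero_le_one, le_refl 1⟩) (by norm_num)
    have hfin : 0 < f 1 := by
      rw [hval] at hstep
      nlinarith
    have : f 1 = a u - fderiv ℝ a ω u := by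
      simp only [hf, hu1]
    linarith [hfin, this ▸ hfin]

private lemma micro_far (hn : 2 ≤ n) {c₀ : ℝ} (hc₀ : 0 < c₀)
    (hsmooth : ContDiffOn ℝ (⊤ : ℕ∞) a {ξ : EuclideanSpace ℝ (Fin n) | ξ ≠ 0})
    (hhom : ∀ (c : ℝ), 0 < c → ∀ ξ : EuclideanSpace ℝ (Fin n), ξ ≠ 0 → a (c • ξ) = c * a ξ)
    (hpos : ∀ ξ : EuclideanSpace ℝ (Fin n), ξ ≠ 0 → 0 < a ξ)
    (hconv : ∀ ω : EuclideanSpace ℝ (Fin n), ‖ω‖ = 1 →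
      ∀ v : EuclideanSpace ℝ (Fin n), ⟪v, ω⟫ = 0 →
        c₀ * ‖v‖ ^ 2 ≤ iteratedFDeriv ℝ 2 a ω ![v, v])
    {M : ℝ} (hMpos : 0 < M)
    (hM : ∀ z : EuclideanSpace ℝ (Fin n), ‖z‖ = 1 → ‖fderiv ℝ (fderiv ℝ a) z‖ ≤ M) :
    ∃ m₁ > 0, ∀ ω u : EuclideanSpace ℝ (Fin n), ‖ω‖ = 1 → ‖u‖ = 1 →
      1/4 ≤ ‖u - ω‖ → m₁ ≤ a u - fderiv ℝ a ω u := by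
  classical
  set Sp := Metric.sphere (0 : EuclideanSpace ℝ (Fin n)) 1 with hSp
  set K := (Sp ×ˢ Sp) ∩ {p : EuclideanSpace ℝ (Fin n) × EuclideanSpace ℝ (Fin n) |
    1/4 ≤ ‖p.2 - p.1‖} with hKdef
  have hKc : IsCompact K :=
    ((isCompact_sphere 0 1).prod (isCompact_sphere 0 1)).inter_right
      (isClosed_le continuous_const ((continuous_snd.sub continuous_fst).norm))
  have hsub : ∀ p ∈ K, p.1 ≠ 0 ∧ p.2 ≠ 0 := by
    intro p hp
    obtain ⟨hp1, -⟩ := hp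
    obtain ⟨h1, h2⟩ := Set.mem_prod.1 hp1
    rw [hSp, mem_sphere_zero_iff_norm] at h1 h2
    constructor
    · intro h; rw [h] at h1; simp at h1
    · intro h; rw [h] at h2; simp at h2
  have hne : K.Nonempty := by
    set e := EuclideanSpace.single (⟨0, by omega⟩ : Fin n) (1:ℝ) with he
    have hen : ‖e‖ = 1 := by rw [he, EuclideanSpace.norm_single]; norm_num
    refine ⟨(e, -e), Set.mem_prod.2 ⟨?_, ?_⟩, ?_⟩
    · rwa [hSp, mem_sphere_zero_iff_norm]
    · rw [hSp, mem_sphere_zero_iff_norm, norm_neg]; exact hen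
    · show 1/4 ≤ ‖(-e) - e‖
      have h : (-e) - e = (-2 : ℝ) • e := by module
      rw [h, norm_smul, hen]
      norm_num
  have hfc : ContinuousOn (fderiv ℝ a) {ξ : EuclideanSpace ℝ (Fin n) | ξ ≠ 0} :=
    hsmooth.continuousOn_fderiv_of_isOpen isOpen_ne (by norm_cast)
  have hGcont : ContinuousOn
      (fun p : EuclideanSpace ℝ (Fin n) × EuclideanSpace ℝ (Fin n) =>
        a p.2 - fderiv ℝ a p.1 p.2) K := by
    have hc1 : ContinuousOn (fun p : EuclideanSpace ℝ (Fin n) × EuclideanSpace ℝ (Fin n) =>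
        a p.2) K :=
      hsmooth.continuousOn.comp continuous_snd.continuousOn (fun p hp => (hsub p hp).2)
    have hc2 : ContinuousOn (fun p : EuclideanSpace ℝ (Fin n) × EuclideanSpace ℝ (Fin n) =>
        fderiv ℝ a p.1) K :=
      hfc.comp continuous_fst.continuousOn (fun p hp => (hsub p hp).1)
    exact hc1.sub (hc2.clm_apply continuous_snd.continuousOn)
  obtain ⟨p₀, hp₀, hminOn⟩ := hKc.exists_isMinOn hne hGcont
  have hp₀1 : ‖p₀.1‖ = 1 := by
    obtain ⟨hp1, -⟩ := hp₀
    exact mem_sphere_zero_iff_norm.1 (Set.mem_prod.1 hp1).1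
  have hp₀2 : ‖p₀.2‖ = 1 := by
    obtain ⟨hp1, -⟩ := hp₀
    exact mem_sphere_zero_iff_norm.1 (Set.mem_prod.1 hp1).2
  have hp₀3 : (1:ℝ)/4 ≤ ‖p₀.2 - p₀.1‖ := hp₀.2
  have hp₀ne : p₀.2 ≠ p₀.1 := by
    intro h
    rw [h, sub_self, norm_zero] at hp₀3
    norm_num at hp₀3
  refine ⟨a p₀.2 - fderiv ℝ a p₀.1 p₀.2, ?_, ?_⟩
  · exact micro_pos hc₀ hsmooth hhom hpos hconv hMpos hM hp₀1 hp₀2 hp₀ne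
  · intro ω u hω hu hfar
    have hmem : (ω, u) ∈ K := by
      refine ⟨Set.mem_prod.2 ⟨?_, ?_⟩, hfar⟩
      · rwa [hSp, mem_sphere_zero_iff_norm]
      · rwa [hSp, mem_sphere_zero_iff_norm]
    exact isMinOn_iff.1 hminOn _ hmem

private lemma micro_max (hn : 2 ≤ n)
    (hsmooth : ContDiffOn ℝ (⊤ : ℕ∞) a {ξ : EuclideanSpace ℝ (Fin n) | ξ ≠ 0}) :
    ∃ M₁ : ℝ, ∀ ω u : EuclideanSpace ℝ (Fin n), ‖ω‖ = 1 → ‖u‖ = 1 →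
      a u - fderiv ℝ a ω u ≤ M₁ := by
  classical
  set Sp := Metric.sphere (0 : EuclideanSpace ℝ (Fin n)) 1 with hSp
  set K := Sp ×ˢ Sp with hKdef
  have hKc : IsCompact K := (isCompact_sphere 0 1).prod (isCompact_sphere 0 1)
  have hsub : ∀ p ∈ K, p.1 ≠ 0 ∧ p.2 ≠ 0 := by
    intro p hp
    obtain ⟨h1, h2⟩ := Set.mem_prod.1 hp
    rw [hSp, mem_sphere_zero_iff_norm] at h1 h2
    constructor
    · intro h; rw [h] at h1; simp at h1
    · intro h; rw [h] at h2; simp at h2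
  have hne : K.Nonempty := by
    set e := EuclideanSpace.single (⟨0, by omega⟩ : Fin n) (1:ℝ) with he
    have hen : ‖e‖ = 1 := by rw [he, EuclideanSpace.norm_single]; norm_num
    exact ⟨(e, e), Set.mem_prod.2 ⟨by rwa [hSp, mem_sphere_zero_iff_norm],
      by rwa [hSp, mem_sphere_zero_iff_norm]⟩⟩
  have hfc : ContinuousOn (fderiv ℝ a) {ξ : EuclideanSpace ℝ (Fin n) | ξ ≠ 0} :=
    hsmooth.continuousOn_fderiv_of_isOpen isOpen_ne (by norm_cast)
  have hGcont : ContinuousOn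
      (fun p : EuclideanSpace ℝ (Fin n) × EuclideanSpace ℝ (Fin n) =>
        a p.2 - fderiv ℝ a p.1 p.2) K := by
    have hc1 : ContinuousOn (fun p : EuclideanSpace ℝ (Fin n) × EuclideanSpace ℝ (Fin n) =>
        a p.2) K :=
      hsmooth.continuousOn.comp continuous_snd.continuousOn (fun p hp => (hsub p hp).2)
    have hc2 : ContinuousOn (fun p : EuclideanSpace ℝ (Fin n) × EuclideanSpace ℝ (Fin n) =>
        fderiv ℝ a p.1) K :=
      hfc.comp continuous_fst.continuousOn (fun p hp => (hsub p hp).1)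
    exact hc1.sub (hc2.clm_apply continuous_snd.continuousOn)
  obtain ⟨p₀, hp₀, hmaxOn⟩ := hKc.exists_isMaxOn hne hGcont
  refine ⟨a p₀.2 - fderiv ℝ a p₀.1 p₀.2, ?_⟩
  intro ω u hω hu
  have hmem : (ω, u) ∈ K := Set.mem_prod.2 ⟨by rwa [hSp, mem_sphere_zero_iff_norm],
    by rwa [hSp, mem_sphere_zero_iff_norm]⟩
  exact isMaxOn_iff.1 hmaxOn _ hmem

/-- **Microellipticity of one-homogeneous symbols at angular separation.**
Let `a : ℝⁿ ∖ {0} → ℝ` be smooth, positively homogeneous of degree 1 and positive, with Hessian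
uniformly positive definite on the orthogonal complement of each unit vector. Then there are
constants `c, C > 0` depending only on `a` such that for every unit vector `ω` and every `ξ ≠ 0`,
`c |ξ| ∠(ξ,ω)² ≤ a(ξ) − ⟨∇a(ω), ξ⟩ ≤ C |ξ| ∠(ξ,ω)²`. -/
theorem microellipticity_one_homogeneous
    (n : ℕ) (hn : 2 ≤ n)
    (a : EuclideanSpace ℝ (Fin n) → ℝ) (c₀ : ℝ) (hc₀ : 0 < c₀)
    (hsmooth : ContDiffOn ℝ (⊤ : ℕ∞) a {ξ : EuclideanSpace ℝ (Fin n) | ξ ≠ 0})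
    (hhom : ∀ (c : ℝ), 0 < c → ∀ ξ : EuclideanSpace ℝ (Fin n), ξ ≠ 0 → a (c • ξ) = c * a ξ)
    (hpos : ∀ ξ : EuclideanSpace ℝ (Fin n), ξ ≠ 0 → 0 < a ξ)
    (hconv : ∀ ω : EuclideanSpace ℝ (Fin n), ‖ω‖ = 1 →
      ∀ v : EuclideanSpace ℝ (Fin n), ⟪v, ω⟫ = 0 →
        c₀ * ‖v‖ ^ 2 ≤ iteratedFDeriv ℝ 2 a ω ![v, v]) :
    ∃ c > 0, ∃ C > 0, ∀ ω : EuclideanSpace ℝ (Fin n), ‖ω‖ = 1 →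
      ∀ ξ : EuclideanSpace ℝ (Fin n), ξ ≠ 0 →
        c * ‖ξ‖ * InnerProductGeometry.angle ξ ω ^ 2 ≤ a ξ - ⟪gradient a ω, ξ⟫ ∧
        a ξ - ⟪gradient a ω, ξ⟫ ≤ C * ‖ξ‖ * InnerProductGeometry.angle ξ ω ^ 2 := by
  obtain ⟨M, hMpos, hM⟩ := micro_Mbound hn hsmooth
  obtain ⟨m₁, hm₁pos, hm₁⟩ := micro_far hn hc₀ hsmooth hhom hpos hconv hMpos hM
  obtain ⟨M₁, hM₁⟩ := micro_max hn hsmooth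
  set csph : ℝ := min (c₀/4) (m₁/4) with hcsph
  set Csph : ℝ := M + 16 * (|M₁| + 1) with hCsph
  have hcsphpos : 0 < csph := lt_min (by linarith) (by linarith)
  have hCsphpos : 0 < Csph := by positivity
  -- sphere-level two-sided bound
  have hsphere : ∀ ω u : EuclideanSpace ℝ (Fin n), ‖ω‖ = 1 → ‖u‖ = 1 →
      csph * ‖u - ω‖ ^ 2 ≤ a u - fderiv ℝ a ω u ∧
        a u - fderiv ℝ a ω u ≤ Csph * ‖u - ω‖ ^ 2 := by
    intro ω u hω hu
    have hwsq : ‖u - ω‖ ^ 2 ≤ 4 := by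
      have : ‖u - ω‖ ≤ 2 := by
        calc ‖u - ω‖ ≤ ‖u‖ + ‖ω‖ := norm_sub_le u ω
          _ = 2 := by rw [hu, hω]; norm_num
      nlinarith [norm_nonneg (u - ω)]
    by_cases hcl : ‖u - ω‖ ≤ 1/4
    · obtain ⟨hl, hr⟩ := micro_near hc₀ hsmooth hhom hconv hMpos hM hω hu hcl
      constructor
      · calc csph * ‖u - ω‖ ^ 2 ≤ c₀/4 * ‖u - ω‖ ^ 2 :=
            mul_le_mul_of_nonneg_right (min_le_left _ _) (by positivity)
          _ ≤ a u - fderiv ℝ a ω u := hl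
      · calc a u - fderiv ℝ a ω u ≤ M * ‖u - ω‖ ^ 2 := hr
          _ ≤ Csph * ‖u - ω‖ ^ 2 := by
            apply mul_le_mul_of_nonneg_right _ (by positivity)
            rw [hCsph]
            linarith [abs_nonneg M₁]
    · push_neg at hcl
      have hfar := hm₁ ω u hω hu (le_of_lt hcl)
      have hwsq' : (1:ℝ)/16 ≤ ‖u - ω‖ ^ 2 := by nlinarith [norm_nonneg (u - ω)]
      constructor
      · calc csph * ‖u - ω‖ ^ 2 ≤ m₁/4 * ‖u - ω‖ ^ 2 :=
            mul_le_mul_of_nonneg_right (min_le_right _ _) (by positivity)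
          _ ≤ m₁/4 * 4 := by nlinarith
          _ = m₁ := by ring
          _ ≤ a u - fderiv ℝ a ω u := hfar
      · calc a u - fderiv ℝ a ω u ≤ M₁ := hM₁ ω u hω hu
          _ ≤ |M₁| + 1 := by cases abs_cases M₁ <;> linarith
          _ ≤ Csph * (1/16) := by rw [hCsph]; nlinarith
          _ ≤ Csph * ‖u - ω‖ ^ 2 := mul_le_mul_of_nonneg_left hwsq' (le_of_lt hCsphpos)
  -- final constants
  refine ⟨csph * (4 / Real.pi ^ 2), by positivity, Csph, hCsphpos, ?_⟩
  intro ω hω ξ hξ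
  have hξn : (0:ℝ) < ‖ξ‖ := norm_pos_iff.2 hξ
  set u : EuclideanSpace ℝ (Fin n) := ‖ξ‖⁻¹ • ξ with hudef
  have hu : ‖u‖ = 1 := norm_smul_inv_norm hξ
  have hu0 : u ≠ 0 := by intro h; rw [h] at hu; simp at hu
  have hξu : ξ = ‖ξ‖ • u := by
    rw [hudef, smul_smul, mul_inv_cancel₀ (ne_of_gt hξn), one_smul]
  have hgrad : (⟪gradient a ω, ξ⟫ : ℝ) = fderiv ℝ a ω ξ :=
    InnerProductSpace.toDual_symm_apply
  have haval : a ξ = ‖ξ‖ * a u := by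
    conv_lhs => rw [hξu]
    exact hhom _ hξn u hu0
  have hlin : fderiv ℝ a ω ξ = ‖ξ‖ * fderiv ℝ a ω u := by
    conv_lhs => rw [hξu]
    rw [map_smul, smul_eq_mul]
  have hangle : InnerProductGeometry.angle ξ ω = InnerProductGeometry.angle u ω := by
    conv_lhs => rw [hξu]
    exact InnerProductGeometry.angle_smul_left_of_pos u ω hξn
  have hdecomp : a ξ - ⟪gradient a ω, ξ⟫ = ‖ξ‖ * (a u - fderiv ℝ a ω u) := by
    rw [hgrad, haval, hlin]; ring
  obtain ⟨hch1, hch2⟩ := micro_chord hu hω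
  obtain ⟨hs1, hs2⟩ := hsphere ω u hω hu
  rw [hdecomp, hangle]
  set θ : ℝ := InnerProductGeometry.angle u ω
  constructor
  · have h1 : csph * (4 / Real.pi ^ 2 * θ ^ 2) ≤ csph * ‖u - ω‖ ^ 2 :=
      mul_le_mul_of_nonneg_left hch1 (le_of_lt hcsphpos)
    have h2 : csph * (4 / Real.pi ^ 2 * θ ^ 2) ≤ a u - fderiv ℝ a ω u := le_trans h1 hs1
    calc csph * (4 / Real.pi ^ 2) * ‖ξ‖ * θ ^ 2
        = ‖ξ‖ * (csph * (4 / Real.pi ^ 2 * θ ^ 2)) := by ring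
      _ ≤ ‖ξ‖ * (a u - fderiv ℝ a ω u) :=
          mul_le_mul_of_nonneg_left h2 (norm_nonneg ξ)
  · have h1 : Csph * ‖u - ω‖ ^ 2 ≤ Csph * θ ^ 2 :=
      mul_le_mul_of_nonneg_left hch2 (le_of_lt hCsphpos)
    have h2 : a u - fderiv ℝ a ω u ≤ Csph * θ ^ 2 := le_trans hs2 h1
    calc ‖ξ‖ * (a u - fderiv ℝ a ω u) ≤ ‖ξ‖ * (Csph * θ ^ 2) :=
        mul_le_mul_of_nonneg_left h2 (norm_nonneg ξ)
      _ = Csph * ‖ξ‖ * θ ^ 2 := by ring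
end
end
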